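/- arXiv:math/0504031 — 5 statements merged into one kernel-verified Lean document; each statement's English description precedes it below -/
import Mathlib

section
/- Let E be a real Hilbert space and let S be the automorphism of E × E defined by S(x₁,x₂) = (x₂,x₁). Suppose ℓ₁ : E × E → ℝ ∪ {+∞} is a proper convex lower semicontinuous (+I)-antiselfdual Lagrangian (i.e., ℓ₁*(p,x) = ℓ₁(−x,−p) for all (x,p) ∈ E × E) and ℓ₂ : E × E → ℝ ∪ {+∞} is a proper convex lower semicontinuous (−I)-antiselfdual Lagrangian (i.e., ℓ₂*(p,x) = ℓ₂(x,p) for all (x,p) ∈ E × E). Then the Lagrangian ℓ : (E×E) × (E×E) → ℝ ∪ {+∞} defined by ℓ((a₁,a₂),(b₁,b₂)) = ℓ₁(a₁,a₂) + ℓ₂(b₁,b₂) is S-selfdual on (E×E) × (E×E), i.e., ℓ*(a, b) = ℓ(−Sa, Sb) for all a, b ∈ E × E. -/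
open MeasureTheory Set
open scoped RealInnerProductSpace Classical

noncomputable section

/-- Convexity for `EReal`-valued functions. -/
def EConvexOn {E : Type*} [AddCommGroup E] [Module ℝ E] (F : E → EReal) : Prop :=
  ∀ x y : E, ∀ a b : ℝ, 0 ≤ a → 0 ≤ b → a + b = 1 →
    F (a • x + b • y) ≤ (a : EReal) * F x + (b : EReal) * F y

/-- A function into `ℝ ∪ {+∞}` is proper: never `-∞` and not identically `+∞`. -/
def EProper {E : Type*} (F : E → EReal) : Prop :=
  (∃ x, F x ≠ ⊤) ∧ ∀ x, F x ≠ ⊥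

/-- Integral of an `ℝ ∪ {+∞}`-valued function: the Bochner integral of its real part when the
function is a.e. finite with integrable real part, and `+∞` otherwise. -/
noncomputable def eIntegral {α : Type*} [MeasurableSpace α] (μ : Measure α) (f : α → EReal) :
    EReal :=
  if Integrable (fun a => (f a).toReal) μ ∧ (∀ᵐ a ∂μ, f a = ((f a).toReal : EReal)) then
    ((∫ a, (f a).toReal ∂μ : ℝ) : EReal)
  else ⊤

variable {H : Type*} [NormedAddCommGroup H] [InnerProductSpace ℝ H]

/-- Fenchel conjugate of a function on `H × H`. -/
noncomputable def eConj2 (F : H × H → EReal) (q : H × H) : EReal :=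
  ⨆ z : H × H, ((⟪z.1, q.1⟫ + ⟪z.2, q.2⟫ : ℝ) : EReal) - F z

/-- Fenchel conjugate of a function on `H`. -/
noncomputable def eConj (f : H → EReal) (p : H) : EReal :=
  ⨆ x : H, ((⟪x, p⟫ : ℝ) : EReal) - f x

/-- `p` is a subgradient of `f` at `x`. -/
def ESubdiff (f : H → EReal) (x p : H) : Prop :=
  ∀ y, f x + ((⟪p, y - x⟫ : ℝ) : EReal) ≤ f y

/-- `q` belongs to the (joint) subdifferential of `F` at `z`. -/
def ESubdiff2 (F : H × H → EReal) (z q : H × H) : Prop :=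
  ∀ w : H × H, F z + ((⟪q.1, w.1 - z.1⟫ + ⟪q.2, w.2 - z.2⟫ : ℝ) : EReal) ≤ F w

/-- Absolutely continuous arcs `x : [0,T] → H` whose derivative `x'` lies in `L^α([0,T];H)`. -/
def IsArc (T α : ℝ) (x x' : ℝ → H) : Prop :=
  MemLp x' (ENNReal.ofReal α) (volume.restrict (Icc 0 T)) ∧
  ∀ t ∈ Icc (0:ℝ) T, x t = x 0 + ∫ s in (0:ℝ)..t, x' s

/-- Fenchel conjugate of a function on `(H × H) × (H × H)`. -/
noncomputable def eConj4 (F : (H × H) × (H × H) → EReal) (q : (H × H) × (H × H)) : EReal :=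
  ⨆ z : (H × H) × (H × H),
    ((⟪z.1.1, q.1.1⟫ + ⟪z.1.2, q.1.2⟫ + ⟪z.2.1, q.2.1⟫ + ⟪z.2.2, q.2.2⟫ : ℝ) : EReal) - F z


lemma iSup_prod_add_eq {A B : Type*} (phi : A → EReal) (psi : B → EReal) :
    (⨆ z : A × B, phi z.1 + psi z.2) = (⨆ a, phi a) + (⨆ b, psi b) := by
  apply le_antisymm
  · exact iSup_le fun z => add_le_add (le_iSup phi z.1) (le_iSup psi z.2)
  · refine EReal.add_le_of_forall_lt fun a' ha' b' hb' => ?_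
    obtain ⟨i, hi⟩ := lt_iSup_iff.1 ha'
    obtain ⟨j, hj⟩ := lt_iSup_iff.1 hb'
    exact le_trans (EReal.add_lt_add hi hj).le (le_iSup (fun z : A × B => phi z.1 + psi z.2) (i, j))

lemma coe_sub_add_split (c₁ c₂ : ℝ) (u v : EReal) (hu : u ≠ ⊥) (hv : v ≠ ⊥) :
    ((c₁ + c₂ : ℝ) : EReal) - (u + v) = (((c₁ : ℝ) : EReal) - u) + (((c₂ : ℝ) : EReal) - v) := by
  rcases eq_top_or_lt_top u with rfl | hu'
  · rw [EReal.top_add_of_ne_bot hv]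
    simp [sub_eq_add_neg]
  rcases eq_top_or_lt_top v with rfl | hv'
  · rw [EReal.add_top_of_ne_bot hu]
    simp [sub_eq_add_neg]
  lift u to ℝ using ⟨hu'.ne, hu⟩
  lift v to ℝ using ⟨hv'.ne, hv⟩
  norm_cast
  ring

/-- Lemma 2.3, first part: the sum of a `(+I)`-antiselfdual Lagrangian and a
`(−I)`-antiselfdual Lagrangian is an `S`-selfdual Lagrangian for `S(x₁,x₂) = (x₂,x₁)`. -/
theorem statement4 (ℓ₁ ℓ₂ : H × H → EReal)
    (hp₁ : EProper ℓ₁) (hc₁ : EConvexOn ℓ₁) (hl₁ : LowerSemicontinuous ℓ₁)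
    (hp₂ : EProper ℓ₂) (hc₂ : EConvexOn ℓ₂) (hl₂ : LowerSemicontinuous ℓ₂)
    (hasd₁ : ∀ x p : H, eConj2 ℓ₁ (p, x) = ℓ₁ (-x, -p))
    (hasd₂ : ∀ x p : H, eConj2 ℓ₂ (p, x) = ℓ₂ (x, p)) :
    ∀ a b : H × H,
      eConj4 (fun z : (H × H) × (H × H) => ℓ₁ z.1 + ℓ₂ z.2) (a, b) =
        ℓ₁ (-a.2, -a.1) + ℓ₂ (b.2, b.1) := by
  intro a b
  have key : eConj4 (fun z : (H × H) × (H × H) => ℓ₁ z.1 + ℓ₂ z.2) (a, b) =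
      eConj2 ℓ₁ (a.1, a.2) + eConj2 ℓ₂ (b.1, b.2) := by
    unfold eConj4 eConj2
    rw [← iSup_prod_add_eq (fun z : H × H => ((⟪z.1, a.1⟫ + ⟪z.2, a.2⟫ : ℝ) : EReal) - ℓ₁ z)
      (fun z : H × H => ((⟪z.1, b.1⟫ + ⟪z.2, b.2⟫ : ℝ) : EReal) - ℓ₂ z)]
    refine iSup_congr fun z => ?_
    have h := coe_sub_add_split (⟪z.1.1, a.1⟫ + ⟪z.1.2, a.2⟫) (⟪z.2.1, b.1⟫ + ⟪z.2.2, b.2⟫)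
      (ℓ₁ z.1) (ℓ₂ z.2) (hp₁.2 z.1) (hp₂.2 z.2)
    rw [show (⟪z.1.1, a.1⟫ + ⟪z.1.2, a.2⟫ + ⟪z.2.1, b.1⟫ + ⟪z.2.2, b.2⟫ : ℝ) =
      (⟪z.1.1, a.1⟫ + ⟪z.1.2, a.2⟫) + (⟪z.2.1, b.1⟫ + ⟪z.2.2, b.2⟫) by ring]
    exact h
  rw [key, hasd₁ a.2 a.1, hasd₂ b.2 b.1]
end
end

section
/- Let E be a real Hilbert space, let ψ₁, ψ₂ : E → ℝ ∪ {+∞} be proper convex lower semicontinuous functions, and let A₁, A₂ : E → E be bounded skew-adjoint operators (Aᵢ* = −Aᵢ). Let S be the automorphism of E × E given by S(x₁,x₂) = (x₂,x₁). Then the Lagrangian ℓ : (E×E) × (E×E) → ℝ ∪ {+∞} defined by ℓ((a₁,a₂),(b₁,b₂)) = ψ₁(a₁) + ψ₁*(−A₁a₁ − a₂) + ψ₂(b₁) + ψ₂*(−A₂b₁ + b₂) is S-selfdual, i.e., ℓ*(a,b) = ℓ(−Sa, Sb) for all a, b ∈ E × E. -/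
open MeasureTheory Set
open scoped RealInnerProductSpace Classical

noncomputable section

variable {H : Type*} [NormedAddCommGroup H] [InnerProductSpace ℝ H]

namespace FMhelp


lemma sub_split (r s : ℝ) (u v : EReal) (hu : u ≠ ⊥) (hv : v ≠ ⊥) :
    ((r + s : ℝ) : EReal) - (u + v) = ((r : EReal) - u) + ((s : EReal) - v) := by
  induction u with
  | bot => exact absurd rfl hu
  | top =>
      rw [EReal.top_add_of_ne_bot hv]
      have h1 : ((r + s : ℝ) : EReal) - ⊤ = ⊥ := by
        simp [sub_eq_add_neg]
      have h2 : ((r : EReal) - ⊤) = ⊥ := by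
        simp [sub_eq_add_neg]
      rw [h1, h2, EReal.bot_add]
  | coe a =>
      induction v with
      | bot => exact absurd rfl hv
      | top =>
          rw [EReal.add_top_of_ne_bot (EReal.coe_ne_bot a)]
          have h1 : ((r + s : ℝ) : EReal) - ⊤ = ⊥ := by
            simp [sub_eq_add_neg]
          have h2 : ((s : EReal) - ⊤) = ⊥ := by
            simp [sub_eq_add_neg]
          rw [h1, h2, EReal.add_bot]
      | coe b =>
          norm_cast
          push_cast
          ring

lemma exists_lt_lt_of_lt_add {a b : EReal} {z : ℝ} (h : (z : EReal) < a + b) :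
    ∃ x y : ℝ, (x : EReal) < a ∧ (y : EReal) < b ∧ z ≤ x + y := by
  induction a with
  | bot => simp [EReal.bot_add] at h
  | top =>
      induction b with
      | bot => simp [EReal.add_bot] at h
      | top => exact ⟨z, 0, EReal.coe_lt_top _, EReal.coe_lt_top _, by simp⟩
      | coe b => exact ⟨z - b + 1, b - 1, EReal.coe_lt_top _, by exact_mod_cast by linarith, by linarith⟩
  | coe a =>
      induction b with
      | bot => simp [EReal.add_bot] at h
      | top => exact ⟨a - 1, z - a + 1, by exact_mod_cast by linarith, EReal.coe_lt_top _, by linarith⟩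
      | coe b =>
          have hz : z < a + b := by exact_mod_cast h
          exact ⟨a - (a + b - z)/2, b - (a + b - z)/2,
            by exact_mod_cast by linarith, by exact_mod_cast by linarith, by linarith⟩

lemma iSup_prod_add {α β : Type*} [Nonempty α] [Nonempty β] (f : α → EReal) (g : β → EReal) :
    (⨆ p : α × β, (f p.1 + g p.2)) = (⨆ x, f x) + ⨆ y, g y := by
  apply le_antisymm
  · exact iSup_le fun p => add_le_add (le_iSup f p.1) (le_iSup g p.2)
  · rw [← EReal.ge_of_forall_gt_iff_ge]
    intro z hz
    obtain ⟨x, y, hx, hy, hxy⟩ := exists_lt_lt_of_lt_add hz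
    obtain ⟨i, hi⟩ := lt_iSup_iff.1 hx
    obtain ⟨j, hj⟩ := lt_iSup_iff.1 hy
    calc (z : EReal) ≤ ((x + y : ℝ) : EReal) := by exact_mod_cast hxy
      _ = (x : EReal) + (y : EReal) := by norm_cast
      _ ≤ f i + g j := add_le_add hi.le hj.le
      _ ≤ ⨆ p : α × β, (f p.1 + g p.2) := le_iSup (fun p : α × β => f p.1 + g p.2) (i, j)



lemma coe_sub_top (r : ℝ) : (r : EReal) - ⊤ = ⊥ := by simp [sub_eq_add_neg]

lemma sub_le_flip {r : ℝ} {u v : EReal} (hv : v ≠ ⊥) (h : (r : EReal) - v ≤ u) :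
    (r : EReal) - u ≤ v := by
  induction u with
  | top => rw [coe_sub_top]; exact bot_le
  | bot =>
      have : (r : EReal) - v = ⊥ := le_bot_iff.1 h
      have hvtop : v = ⊤ := by
        by_contra hvt
        lift v to ℝ using ⟨hvt, hv⟩
        rw [← EReal.coe_sub] at this
        exact EReal.coe_ne_bot _ this
      simp [hvtop]
  | coe a =>
      induction v with
      | bot => exact absurd rfl hv
      | top => exact le_top
      | coe b =>
          rw [← EReal.coe_sub] at h ⊢
          have := EReal.coe_le_coe_iff.1 h
          exact EReal.coe_le_coe_iff.2 (by linarith)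

variable [CompleteSpace H]

lemma eConj_ne_bot {ψ : H → EReal} (hp : EProper ψ) (p : H) : eConj ψ p ≠ ⊥ := by
  obtain ⟨⟨x₀, hx₀⟩, hbot⟩ := hp
  lift ψ x₀ to ℝ using ⟨hx₀, hbot x₀⟩ with t₀ ht₀
  have h1 : ((⟪x₀, p⟫ : ℝ) : EReal) - ψ x₀ ≤ eConj ψ p := le_iSup (fun y => ((⟪y, p⟫ : ℝ) : EReal) - ψ y) x₀
  rw [← ht₀, ← EReal.coe_sub] at h1
  exact fun h => EReal.coe_ne_bot _ (le_bot_iff.1 (h ▸ h1))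

lemma le_eConj {ψ : H → EReal} (p x : H) : ((⟪x, p⟫ : ℝ) : EReal) - ψ x ≤ eConj ψ p :=
  le_iSup (fun y => ((⟪y, p⟫ : ℝ) : EReal) - ψ y) x

lemma eConj_le {ψ : H → EReal} {p : H} {M : ℝ} (hbot : ∀ y, ψ y ≠ ⊥)
    (h : ∀ (y : H) (t : ℝ), ψ y = (t : EReal) → ⟪y, p⟫ - t ≤ M) :
    eConj ψ p ≤ (M : EReal) := by
  refine iSup_le fun y => ?_
  rcases eq_or_ne (ψ y) ⊤ with hy | hy
  · rw [hy, coe_sub_top]; exact bot_le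
  · lift ψ y to ℝ using ⟨hy, hbot y⟩ with t ht
    rw [← EReal.coe_sub]
    exact EReal.coe_le_coe_iff.2 (h y t ht.symm)

/-- easy half of Fenchel–Moreau -/
lemma biconj_le {ψ : H → EReal} (hbot : ∀ y, ψ y ≠ ⊥) (x : H) :
    eConj (eConj ψ) x ≤ ψ x := by
  refine iSup_le fun p => ?_
  have h1 : ((⟪x, p⟫ : ℝ) : EReal) - ψ x ≤ eConj ψ p := le_iSup (fun y => ((⟪y, p⟫ : ℝ) : EReal) - ψ y) x
  rw [real_inner_comm] at h1
  exact sub_le_flip (hbot x) h1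

section epi

variable {ψ : H → EReal}

lemma epi_closed (hl : LowerSemicontinuous ψ) :
    IsClosed {z : H × ℝ | ψ z.1 ≤ (z.2 : EReal)} := by
  have hcont : Continuous fun z : H × ℝ => ((z.1, (z.2 : EReal)) : H × EReal) :=
    continuous_fst.prodMk (continuous_coe_real_ereal.comp continuous_snd)
  exact hl.isClosed_epigraph.preimage hcont

lemma epi_convex (hc : EConvexOn ψ) :
    Convex ℝ {z : H × ℝ | ψ z.1 ≤ (z.2 : EReal)} := by
  rintro ⟨y₁, t₁⟩ h₁ ⟨y₂, t₂⟩ h₂ a b ha hb hab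
  simp only [Set.mem_setOf_eq] at h₁ h₂ ⊢
  calc ψ (a • y₁ + b • y₂) ≤ (a : EReal) * ψ y₁ + (b : EReal) * ψ y₂ := hc _ _ a b ha hb hab
    _ ≤ (a : EReal) * (t₁ : EReal) + (b : EReal) * (t₂ : EReal) := by
        gcongr
    _ = (((a • (y₁, t₁) + b • (y₂, t₂) : H × ℝ).2 : ℝ) : EReal) := by
        simp only [Prod.smul_def, Prod.fst_add, Prod.snd_add, smul_eq_mul]
        norm_cast

/-- representation of a continuous functional on `H × ℝ` -/
lemma functional_rep (f : (H × ℝ) →L[ℝ] ℝ) :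
    ∃ p₀ : H, ∀ (y : H) (t : ℝ), f (y, t) = ⟪y, p₀⟫ + t * f (0, 1) := by
  refine ⟨(InnerProductSpace.toDual ℝ H).symm (f.comp (ContinuousLinearMap.inl ℝ H ℝ)), ?_⟩
  intro y t
  have hps : ∀ y : H, ⟪y, (InnerProductSpace.toDual ℝ H).symm
      (f.comp (ContinuousLinearMap.inl ℝ H ℝ))⟫ = f (y, 0) := by
    intro y
    rw [real_inner_comm]
    have := InnerProductSpace.toDual_apply_apply (𝕜 := ℝ) (E := H)
      (x := (InnerProductSpace.toDual ℝ H).symm (f.comp (ContinuousLinearMap.inl ℝ H ℝ))) (y := y)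
    rw [LinearIsometryEquiv.apply_symm_apply] at this
    simpa using this
  have hdecomp : ((y, t) : H × ℝ) = (y, 0) + t • ((0 : H), (1 : ℝ)) := by
    simp [Prod.ext_iff]
  rw [hdecomp, map_add, _root_.map_smul, hps, smul_eq_mul]

end epi

/-- existence of an affine minorant: the conjugate is somewhere finite -/
lemma conj_somewhere_finite {ψ : H → EReal} (hp : EProper ψ) (hc : EConvexOn ψ)
    (hl : LowerSemicontinuous ψ) : ∃ (p : H) (M : ℝ), eConj ψ p ≤ (M : EReal) := by
  obtain ⟨⟨x₀, hx₀⟩, hbot⟩ := hp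
  lift ψ x₀ to ℝ using ⟨hx₀, hbot x₀⟩ with t₀ ht₀
  have hnot : ((x₀, t₀ - 1) : H × ℝ) ∉ {z : H × ℝ | ψ z.1 ≤ (z.2 : EReal)} := by
    simp only [Set.mem_setOf_eq, ← ht₀, not_le]
    exact_mod_cast sub_lt_self t₀ one_pos
  obtain ⟨f, u, hfu, hepi⟩ :=
    geometric_hahn_banach_point_closed (epi_convex hc) (epi_closed hl) hnot
  obtain ⟨p₀, hrep⟩ := functional_rep f
  set s := f (0, 1) with hs_def
  have hmem : ((x₀, t₀) : H × ℝ) ∈ {z : H × ℝ | ψ z.1 ≤ (z.2 : EReal)} := by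
    simp [Set.mem_setOf_eq, ← ht₀]
  have h1 : u < ⟪x₀, p₀⟫ + t₀ * s := by have := hepi _ hmem; rwa [hrep] at this
  have h2 : ⟪x₀, p₀⟫ + (t₀ - 1) * s < u := by rwa [hrep] at hfu
  have hs : 0 < s := by nlinarith
  refine ⟨(-(1 / s)) • p₀, -u / s, eConj_le hbot ?_⟩
  intro y t hyt
  have hmemy : ((y, t) : H × ℝ) ∈ {z : H × ℝ | ψ z.1 ≤ (z.2 : EReal)} := by
    simp [Set.mem_setOf_eq, hyt]
  have h3 : u < ⟪y, p₀⟫ + t * s := by have := hepi _ hmemy; rwa [hrep] at this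
  rw [real_inner_smul_right]
  have hne : s ≠ 0 := ne_of_gt hs
  have heq : -(1 / s) * ⟪y, p₀⟫ - t = (-(⟪y, p₀⟫ + t * s)) / s := by field_simp; ring
  rw [heq]
  rw [div_le_div_iff_of_pos_right hs]
  linarith
end FMhelp

section FM
open FMhelp
variable {H : Type*} [NormedAddCommGroup H] [InnerProductSpace ℝ H] [CompleteSpace H]

lemma conj_bound_of_sep {ψ : H → EReal} (hbot : ∀ y, ψ y ≠ ⊥) {p₀ : H} {s u : ℝ} (hs : 0 < s)
    (h : ∀ (y : H) (t : ℝ), ψ y = (t : EReal) → u < ⟪y, p₀⟫ + t * s) :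
    eConj ψ ((-(1 / s)) • p₀) ≤ ((-u / s : ℝ) : EReal) := by
  refine eConj_le hbot ?_
  intro y t hyt
  have h3 := h y t hyt
  rw [real_inner_smul_right]
  have hne : s ≠ 0 := ne_of_gt hs
  have heq : -(1 / s) * ⟪y, p₀⟫ - t = (-(⟪y, p₀⟫ + t * s)) / s := by field_simp; ring
  rw [heq]
  rw [div_le_div_iff_of_pos_right hs]
  linarith

/-- **Fenchel–Moreau**: the biconjugate of a proper convex lsc function is itself. -/
theorem biconj_eq {ψ : H → EReal} (hp : EProper ψ) (hc : EConvexOn ψ)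
    (hl : LowerSemicontinuous ψ) (x : H) : eConj (eConj ψ) x = ψ x := by
  obtain ⟨⟨x₀, hx₀⟩, hbot⟩ := hp
  refine le_antisymm (biconj_le hbot x) ?_
  by_contra hltn
  rw [not_le] at hltn
  obtain ⟨c, hc1, hc2⟩ := EReal.exists_between_coe_real hltn
  refine absurd hc1 (not_lt.2 ?_)
  lift ψ x₀ to ℝ using ⟨hx₀, hbot x₀⟩ with t₀ ht₀
  have hnot : ((x, c) : H × ℝ) ∉ {z : H × ℝ | ψ z.1 ≤ (z.2 : EReal)} := by
    simp only [Set.mem_setOf_eq, not_le]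
    exact hc2
  obtain ⟨f, u, hfu, hepi⟩ :=
    geometric_hahn_banach_point_closed (epi_convex hc) (epi_closed hl) hnot
  obtain ⟨p₀, hrep⟩ := functional_rep f
  set s := f (0, 1) with hs_def
  rw [hrep] at hfu
  have hepil : ∀ (y : H) (t : ℝ), ψ y = (t : EReal) → u < ⟪y, p₀⟫ + t * s := by
    intro y t hyt
    have := hepi (y, t) (by simp [Set.mem_setOf_eq, hyt])
    rwa [hrep] at this
  have hs0 : 0 ≤ s := by
    by_contra hneg
    rw [not_le] at hneg
    obtain ⟨n, hn⟩ := exists_nat_gt ((⟪x₀, p₀⟫ + t₀ * s - u) / (-s))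
    rw [div_lt_iff₀ (by linarith : (0:ℝ) < -s)] at hn
    have hmem : ((x₀, t₀ + n) : H × ℝ) ∈ {z : H × ℝ | ψ z.1 ≤ (z.2 : EReal)} := by
      simp only [Set.mem_setOf_eq, ← ht₀]
      exact_mod_cast (by linarith [Nat.cast_nonneg (α := ℝ) n] : t₀ ≤ t₀ + (n : ℝ))
    have h4 := hepi _ hmem
    rw [hrep] at h4
    nlinarith
  rcases hs0.eq_or_lt with hs | hs
  · -- s = 0
    have hdom : ∀ (y : H) (t : ℝ), ψ y = (t : EReal) → u < ⟪y, p₀⟫ := by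
      intro y t hyt
      have := hepil y t hyt
      rw [← hs] at this
      simpa using this
    obtain ⟨pb, M, hpbM⟩ :=
      conj_somewhere_finite ⟨⟨x₀, ht₀ ▸ EReal.coe_ne_top t₀⟩, hbot⟩ hc hl
    have hδ : 0 < u - ⟪x, p₀⟫ := by
      rw [← hs] at hfu
      simp only [mul_zero, add_zero] at hfu
      linarith
    set δ : ℝ := u - ⟪x, p₀⟫ with hδdef
    set lam : ℝ := max 0 ((c - ⟪x, pb⟫ + M) / δ) with hlamdef
    have hlam0 : (0:ℝ) ≤ lam := le_max_left _ _
    have hlam : c - ⟪x, pb⟫ + M ≤ lam * δ := by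
      have h5 : (c - ⟪x, pb⟫ + M) / δ ≤ lam := le_max_right _ _
      calc c - ⟪x, pb⟫ + M = ((c - ⟪x, pb⟫ + M) / δ) * δ := by field_simp
        _ ≤ lam * δ := mul_le_mul_of_nonneg_right h5 hδ.le
    set p : H := pb - lam • p₀ with hpdef
    have hconjp : eConj ψ p ≤ ((M - lam * u : ℝ) : EReal) := by
      refine eConj_le hbot ?_
      intro y t hyt
      have h1 : ⟪y, pb⟫ - t ≤ M := by
        have h6 : ((⟪y, pb⟫ : ℝ) : EReal) - ψ y ≤ eConj ψ pb :=
          le_iSup (fun z => ((⟪z, pb⟫ : ℝ) : EReal) - ψ z) y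
        rw [hyt, ← EReal.coe_sub] at h6
        exact EReal.coe_le_coe_iff.1 (h6.trans hpbM)
      have h2 := hdom y t hyt
      have hip : ⟪y, p⟫ = ⟪y, pb⟫ - lam * ⟪y, p₀⟫ := by
        rw [hpdef, inner_sub_right, real_inner_smul_right]
      rw [hip]
      nlinarith [mul_le_mul_of_nonneg_left h2.le hlam0]
    have hcle : c ≤ ⟪x, p⟫ - (M - lam * u) := by
      have hip : ⟪x, p⟫ = ⟪x, pb⟫ - lam * ⟪x, p₀⟫ := by
        rw [hpdef, inner_sub_right, real_inner_smul_right]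
      rw [hip]
      have : lam * δ = lam * u - lam * ⟪x, p₀⟫ := by rw [hδdef]; ring
      linarith
    calc (c : EReal) ≤ ((⟪x, p⟫ - (M - lam * u) : ℝ) : EReal) := EReal.coe_le_coe_iff.2 hcle
      _ = ((⟪x, p⟫ : ℝ) : EReal) - ((M - lam * u : ℝ) : EReal) := by rw [EReal.coe_sub]
      _ ≤ ((⟪x, p⟫ : ℝ) : EReal) - eConj ψ p := EReal.sub_le_sub le_rfl hconjp
      _ = ((⟪p, x⟫ : ℝ) : EReal) - eConj ψ p := by rw [real_inner_comm]
      _ ≤ eConj (eConj ψ) x := le_iSup (fun q => ((⟪q, x⟫ : ℝ) : EReal) - eConj ψ q) p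
  · -- 0 < s
    set p : H := (-(1 / s)) • p₀ with hpdef
    have hconjp := conj_bound_of_sep hbot hs hepil
    have hcle : c ≤ ⟪x, p⟫ - (-u / s) := by
      have hip : ⟪x, p⟫ = -(1 / s) * ⟪x, p₀⟫ := by rw [hpdef, real_inner_smul_right]
      rw [hip]
      have hne : s ≠ 0 := ne_of_gt hs
      have heq : -(1 / s) * ⟪x, p₀⟫ - -u / s = (u - ⟪x, p₀⟫) / s := by field_simp; ring
      rw [heq, le_div_iff₀ hs]
      linarith
    calc (c : EReal) ≤ ((⟪x, p⟫ - (-u / s) : ℝ) : EReal) := EReal.coe_le_coe_iff.2 hcle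
      _ = ((⟪x, p⟫ : ℝ) : EReal) - ((-u / s : ℝ) : EReal) := by rw [EReal.coe_sub]
      _ ≤ ((⟪x, p⟫ : ℝ) : EReal) - eConj ψ p := EReal.sub_le_sub le_rfl hconjp
      _ = ((⟪p, x⟫ : ℝ) : EReal) - eConj ψ p := by rw [real_inner_comm]
      _ ≤ eConj (eConj ψ) x := le_iSup (fun q => ((⟪q, x⟫ : ℝ) : EReal) - eConj ψ q) p

end FM

section Assembly
open FMhelp

variable {H : Type*} [NormedAddCommGroup H] [InnerProductSpace ℝ H]

lemma eConj4_split (Φ X : H × H → EReal) (hΦ : ∀ z, Φ z ≠ ⊥) (hX : ∀ z, X z ≠ ⊥)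
    (a b : H × H) :
    eConj4 (fun z => Φ z.1 + X z.2) (a, b) = eConj2 Φ a + eConj2 X b := by
  rw [eConj4, eConj2, eConj2]
  have hterm : ∀ z : (H × H) × (H × H),
      ((⟪z.1.1, a.1⟫ + ⟪z.1.2, a.2⟫ + ⟪z.2.1, b.1⟫ + ⟪z.2.2, b.2⟫ : ℝ) : EReal)
          - (Φ z.1 + X z.2)
        = (((⟪z.1.1, a.1⟫ + ⟪z.1.2, a.2⟫ : ℝ) : EReal) - Φ z.1)
          + (((⟪z.2.1, b.1⟫ + ⟪z.2.2, b.2⟫ : ℝ) : EReal) - X z.2) := by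
    intro z
    rw [show (⟪z.1.1, a.1⟫ + ⟪z.1.2, a.2⟫ + ⟪z.2.1, b.1⟫ + ⟪z.2.2, b.2⟫ : ℝ)
        = (⟪z.1.1, a.1⟫ + ⟪z.1.2, a.2⟫) + (⟪z.2.1, b.1⟫ + ⟪z.2.2, b.2⟫) from by ring]
    exact sub_split _ _ _ _ (hΦ z.1) (hX z.2)
  rw [iSup_congr hterm]
  exact iSup_prod_add (fun z1 : H × H => ((⟪z1.1, a.1⟫ + ⟪z1.2, a.2⟫ : ℝ) : EReal) - Φ z1)
    (fun z2 : H × H => ((⟪z2.1, b.1⟫ + ⟪z2.2, b.2⟫ : ℝ) : EReal) - X z2)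

variable [CompleteSpace H]

/-- computation of the conjugate of `(x,p) ↦ ψ x + ψ*(-Ax - p)` -/
lemma eConj2_formula_neg {ψ : H → EReal} (hp : EProper ψ) (hc : EConvexOn ψ)
    (hl : LowerSemicontinuous ψ) (A : H →L[ℝ] H)
    (hA : ∀ x y : H, ⟪A x, y⟫ = -⟪x, A y⟫) (u : H × H) :
    eConj2 (fun z : H × H => ψ z.1 + eConj ψ (-(A z.1) - z.2)) u
      = eConj ψ (u.1 + A u.2) + ψ (-u.2) := by
  rw [eConj2]
  set e : H × H ≃ H × H :=
    { toFun := fun w => (w.1, -(A w.1) - w.2)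
      invFun := fun z => (z.1, -(A z.1) - z.2)
      left_inv := fun w => by simp [Prod.ext_iff]
      right_inv := fun z => by simp [Prod.ext_iff] } with he
  rw [← Equiv.iSup_comp (e := e)
    (g := fun z : H × H => ((⟪z.1, u.1⟫ + ⟪z.2, u.2⟫ : ℝ) : EReal)
      - (ψ z.1 + eConj ψ (-(A z.1) - z.2)))]
  have hterm : ∀ w : H × H,
      ((⟪(e w).1, u.1⟫ + ⟪(e w).2, u.2⟫ : ℝ) : EReal)
          - (ψ (e w).1 + eConj ψ (-(A (e w).1) - (e w).2))
        = (((⟪w.1, u.1 + A u.2⟫ : ℝ) : EReal) - ψ w.1)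
          + (((⟪w.2, -u.2⟫ : ℝ) : EReal) - eConj ψ w.2) := by
    intro w
    have he1 : (e w).1 = w.1 := rfl
    have he2 : (e w).2 = -(A w.1) - w.2 := rfl
    rw [he1, he2]
    have harg : -(A w.1) - (-(A w.1) - w.2) = w.2 := by abel
    rw [harg]
    have hinner : ⟪w.1, u.1⟫ + ⟪-(A w.1) - w.2, u.2⟫ = ⟪w.1, u.1 + A u.2⟫ + ⟪w.2, -u.2⟫ := by
      simp only [inner_sub_left, inner_neg_left, inner_add_right, inner_neg_right, hA w.1 u.2]
      ring
    rw [hinner]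
    exact sub_split _ _ _ _ (hp.2 w.1) (eConj_ne_bot hp w.2)
  have hsplit := iSup_prod_add (fun x : H => ((⟪x, u.1 + A u.2⟫ : ℝ) : EReal) - ψ x)
    (fun q : H => ((⟪q, -u.2⟫ : ℝ) : EReal) - eConj ψ q)
  have hbc : (⨆ q : H, ((⟪q, -u.2⟫ : ℝ) : EReal) - eConj ψ q) = ψ (-u.2) :=
    biconj_eq hp hc hl (-u.2)
  rw [iSup_congr hterm, hsplit, hbc]
  rfl

/-- computation of the conjugate of `(x,p) ↦ ψ x + ψ*(-Ax + p)` -/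
lemma eConj2_formula_pos {ψ : H → EReal} (hp : EProper ψ) (hc : EConvexOn ψ)
    (hl : LowerSemicontinuous ψ) (A : H →L[ℝ] H)
    (hA : ∀ x y : H, ⟪A x, y⟫ = -⟪x, A y⟫) (u : H × H) :
    eConj2 (fun z : H × H => ψ z.1 + eConj ψ (-(A z.1) + z.2)) u
      = eConj ψ (u.1 - A u.2) + ψ u.2 := by
  rw [eConj2]
  set e : H × H ≃ H × H :=
    { toFun := fun w => (w.1, A w.1 + w.2)
      invFun := fun z => (z.1, -(A z.1) + z.2)
      left_inv := fun w => by simp [Prod.ext_iff]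
      right_inv := fun z => by simp [Prod.ext_iff] } with he
  rw [← Equiv.iSup_comp (e := e)
    (g := fun z : H × H => ((⟪z.1, u.1⟫ + ⟪z.2, u.2⟫ : ℝ) : EReal)
      - (ψ z.1 + eConj ψ (-(A z.1) + z.2)))]
  have hterm : ∀ w : H × H,
      ((⟪(e w).1, u.1⟫ + ⟪(e w).2, u.2⟫ : ℝ) : EReal)
          - (ψ (e w).1 + eConj ψ (-(A (e w).1) + (e w).2))
        = (((⟪w.1, u.1 - A u.2⟫ : ℝ) : EReal) - ψ w.1)
          + (((⟪w.2, u.2⟫ : ℝ) : EReal) - eConj ψ w.2) := by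
    intro w
    have he1 : (e w).1 = w.1 := rfl
    have he2 : (e w).2 = A w.1 + w.2 := rfl
    rw [he1, he2]
    have harg : -(A w.1) + (A w.1 + w.2) = w.2 := by abel
    rw [harg]
    have hinner : ⟪w.1, u.1⟫ + ⟪A w.1 + w.2, u.2⟫ = ⟪w.1, u.1 - A u.2⟫ + ⟪w.2, u.2⟫ := by
      simp only [inner_add_left, inner_sub_right, hA w.1 u.2]
      ring
    rw [hinner]
    exact sub_split _ _ _ _ (hp.2 w.1) (eConj_ne_bot hp w.2)
  have hsplit := iSup_prod_add (fun x : H => ((⟪x, u.1 - A u.2⟫ : ℝ) : EReal) - ψ x)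
    (fun q : H => ((⟪q, u.2⟫ : ℝ) : EReal) - eConj ψ q)
  have hbc : (⨆ q : H, ((⟪q, u.2⟫ : ℝ) : EReal) - eConj ψ q) = ψ u.2 :=
    biconj_eq hp hc hl u.2
  rw [iSup_congr hterm, hsplit, hbc]
  rfl

end Assembly

/-- Lemma 2.3, second part: for convex l.s.c. `ψ₁, ψ₂` and bounded
skew-adjoint `A₁, A₂`, the boundary Lagrangian
`ℓ((a₁,a₂),(b₁,b₂)) = ψ₁(a₁) + ψ₁*(−A₁a₁ − a₂) + ψ₂(b₁) + ψ₂*(−A₂b₁ + b₂)` is `S`-selfdual. -/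
theorem statement5 [CompleteSpace H] (ψ₁ ψ₂ : H → EReal)
    (hp₁ : EProper ψ₁) (hc₁ : EConvexOn ψ₁) (hl₁ : LowerSemicontinuous ψ₁)
    (hp₂ : EProper ψ₂) (hc₂ : EConvexOn ψ₂) (hl₂ : LowerSemicontinuous ψ₂)
    (A₁ A₂ : H →L[ℝ] H)
    (hA₁ : ∀ x y : H, ⟪A₁ x, y⟫ = -⟪x, A₁ y⟫) (hA₂ : ∀ x y : H, ⟪A₂ x, y⟫ = -⟪x, A₂ y⟫) :
    ∀ a b : H × H,
      eConj4 (fun z : (H × H) × (H × H) =>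
          ψ₁ z.1.1 + eConj ψ₁ (-(A₁ z.1.1) - z.1.2) +
          ψ₂ z.2.1 + eConj ψ₂ (-(A₂ z.2.1) + z.2.2)) (a, b) =
        ψ₁ (-a.2) + eConj ψ₁ (-(A₁ (-a.2)) - (-a.1)) +
          ψ₂ b.2 + eConj ψ₂ (-(A₂ b.2) + b.1) := by
  intro a b
  set Φ : H × H → EReal := fun z => ψ₁ z.1 + eConj ψ₁ (-(A₁ z.1) - z.2) with hΦdef
  set X : H × H → EReal := fun z => ψ₂ z.1 + eConj ψ₂ (-(A₂ z.1) + z.2) with hXdef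
  have hF : (fun z : (H × H) × (H × H) =>
      ψ₁ z.1.1 + eConj ψ₁ (-(A₁ z.1.1) - z.1.2) +
        ψ₂ z.2.1 + eConj ψ₂ (-(A₂ z.2.1) + z.2.2))
      = fun z : (H × H) × (H × H) => Φ z.1 + X z.2 := by
    funext z
    rw [hΦdef, hXdef]
    simp only []
    rw [add_assoc (ψ₁ z.1.1 + eConj ψ₁ (-(A₁ z.1.1) - z.1.2))]
  rw [hF]
  have hΦbot : ∀ z : H × H, Φ z ≠ ⊥ := by
    intro z h
    rcases EReal.add_eq_bot_iff.1 h with h' | h'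
    · exact hp₁.2 _ h'
    · exact FMhelp.eConj_ne_bot hp₁ _ h'
  have hXbot : ∀ z : H × H, X z ≠ ⊥ := by
    intro z h
    rcases EReal.add_eq_bot_iff.1 h with h' | h'
    · exact hp₂.2 _ h'
    · exact FMhelp.eConj_ne_bot hp₂ _ h'
  rw [eConj4_split Φ X hΦbot hXbot a b,
    eConj2_formula_neg hp₁ hc₁ hl₁ A₁ hA₁ a,
    eConj2_formula_pos hp₂ hc₂ hl₂ A₂ hA₂ b]
  have harg1 : -(A₁ (-a.2)) - (-a.1) = a.1 + A₁ a.2 := by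
    rw [map_neg, neg_neg, sub_neg_eq_add]; abel
  have harg2 : -(A₂ b.2) + b.1 = b.1 - A₂ b.2 := by abel
  rw [harg1, harg2]
  abel
end
end

section
/- Let H be a real Hilbert space and L : H × H → ℝ ∪ {+∞} a proper convex lower semicontinuous antiselfdual Lagrangian, i.e., L*(p,x) = L(−x,−p) for all (x,p) ∈ H × H. For λ > 0 let L_λ(x,p) = inf_z { L(z,p) + ‖x − z‖²_H/(2λ) } + (λ/2)‖p‖²_H be its λ-regularization, and let J_λ(x,p) be the minimizer of z ↦ L(z,p) + ‖x − z‖²_H/(2λ). If (x,y) ∈ H × H satisfies (−y,−x) ∈ ∂L_λ(x,y) (joint subdifferential), then necessarily (−y, −J_λ(x,y)) ∈ ∂L(J_λ(x,y), y). -/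
open MeasureTheory Set
open scoped RealInnerProductSpace Classical

noncomputable section

variable {H : Type*} [NormedAddCommGroup H] [InnerProductSpace ℝ H]

/-- The `λ`-regularization `L_λ` of a Lagrangian `L` on `H × H`. -/
noncomputable def regLag (lam : ℝ) (L : H × H → EReal) : H × H → EReal :=
  fun w => (⨅ z : H, L (z, w.2) + ((‖w.1 - z‖^2 / (2*lam) : ℝ) : EReal)) +
    (((lam/2) * ‖w.2‖^2 : ℝ) : EReal)

/-- Lemma 3.5 (1): if `(−y,−x) ∈ ∂L_λ(x,y)` then
`(−y, −J_λ(x,y)) ∈ ∂L(J_λ(x,y), y)`. -/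
theorem statement15 (L : H × H → EReal)
    (hLp : EProper L) (hLc : EConvexOn L) (hLl : LowerSemicontinuous L)
    (hLasd : ∀ x p : H, eConj2 L (p, x) = L (-x, -p))
    (lam : ℝ) (hlam : 0 < lam) (x y zs : H)
    (hmin : ∀ z : H, L (zs, y) + ((‖x - zs‖^2 / (2*lam) : ℝ) : EReal) ≤
      L (z, y) + ((‖x - z‖^2 / (2*lam) : ℝ) : EReal))
    (hsub : ESubdiff2 (regLag lam L) (x, y) (-y, -x)) :
    ESubdiff2 L (zs, y) (-y, -zs) := by
  obtain ⟨⟨a0, b0⟩, h0top⟩ := hLp.1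
  have hbot := hLp.2
  -- L (zs, y) is finite
  have hfin : L (zs, y) ≠ ⊤ := by
    intro htop
    have h1 := hsub (a0, b0)
    have hlhs : regLag lam L (x, y) = ⊤ := by
      have hinf : (⨅ z : H, L (z, (x, y).2) + ((‖(x, y).1 - z‖ ^ 2 / (2 * lam) : ℝ) : EReal)) = ⊤ := by
        rw [iInf_eq_top]
        intro z
        have h2 := hmin z
        rw [htop, EReal.top_add_coe] at h2
        exact top_le_iff.mp h2
      rw [regLag, hinf, EReal.top_add_coe]
    rw [hlhs, EReal.top_add_coe, top_le_iff] at h1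
    have hupp : regLag lam L (a0, b0) ≤ (L (a0, b0) + ((‖a0 - a0‖ ^ 2 / (2 * lam) : ℝ) : EReal))
        + (((lam / 2) * ‖b0‖ ^ 2 : ℝ) : EReal) := by
      exact add_le_add_left (iInf_le _ a0) _
    rw [h1, top_le_iff] at hupp
    have hne : (L (a0, b0) + ((‖a0 - a0‖ ^ 2 / (2 * lam) : ℝ) : EReal))
        + (((lam / 2) * ‖b0‖ ^ 2 : ℝ) : EReal) ≠ ⊤ := by
      rw [← lt_top_iff_ne_top]
      exact EReal.add_lt_top (EReal.add_lt_top h0top (EReal.coe_ne_top _)).ne (EReal.coe_ne_top _)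
    exact hne hupp
  set r := (L (zs, y)).toReal with hrdef
  have hr : L (zs, y) = (r : EReal) := (EReal.coe_toReal hfin (hbot _)).symm
  -- the master inequality
  have master : ∀ a b c : H,
      ((r + ‖x - zs‖ ^ 2 / (2 * lam) + lam / 2 * ‖y‖ ^ 2 + ⟪-y, a - x⟫ + ⟪-x, b - y⟫ : ℝ) : EReal)
        ≤ L (c, b) + ((‖a - c‖ ^ 2 / (2 * lam) + lam / 2 * ‖b‖ ^ 2 : ℝ) : EReal) := by
    intro a b c
    have h1 := hsub (a, b)
    simp only at h1
    have hlow : ((r + ‖x - zs‖ ^ 2 / (2 * lam) + lam / 2 * ‖y‖ ^ 2 : ℝ) : EReal)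
        ≤ regLag lam L (x, y) := by
      have hlow1 : ((r + ‖x - zs‖ ^ 2 / (2 * lam) : ℝ) : EReal)
          ≤ ⨅ z : H, L (z, (x, y).2) + ((‖(x, y).1 - z‖ ^ 2 / (2 * lam) : ℝ) : EReal) := by
        refine le_iInf fun z => ?_
        have h2 := hmin z
        rw [hr, ← EReal.coe_add] at h2
        exact h2
      calc ((r + ‖x - zs‖ ^ 2 / (2 * lam) + lam / 2 * ‖y‖ ^ 2 : ℝ) : EReal)
          = ((r + ‖x - zs‖ ^ 2 / (2 * lam) : ℝ) : EReal) + ((lam / 2 * ‖y‖ ^ 2 : ℝ) : EReal) := by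
            rw [← EReal.coe_add]
        _ ≤ regLag lam L (x, y) := add_le_add_left hlow1 _
    have hupp : regLag lam L (a, b)
        ≤ L (c, b) + ((‖a - c‖ ^ 2 / (2 * lam) + lam / 2 * ‖b‖ ^ 2 : ℝ) : EReal) := by
      calc regLag lam L (a, b)
          ≤ (L (c, b) + ((‖a - c‖ ^ 2 / (2 * lam) : ℝ) : EReal))
            + ((lam / 2 * ‖b‖ ^ 2 : ℝ) : EReal) := add_le_add_left (iInf_le _ c) _
        _ = L (c, b) + ((‖a - c‖ ^ 2 / (2 * lam) + lam / 2 * ‖b‖ ^ 2 : ℝ) : EReal) := by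
            rw [add_assoc, ← EReal.coe_add]
    calc ((r + ‖x - zs‖ ^ 2 / (2 * lam) + lam / 2 * ‖y‖ ^ 2 + ⟪-y, a - x⟫ + ⟪-x, b - y⟫ : ℝ) : EReal)
        = ((r + ‖x - zs‖ ^ 2 / (2 * lam) + lam / 2 * ‖y‖ ^ 2 : ℝ) : EReal)
          + ((⟪-y, a - x⟫ + ⟪-x, b - y⟫ : ℝ) : EReal) := by
          rw [← EReal.coe_add]; norm_num [add_assoc]
      _ ≤ regLag lam L (x, y) + ((⟪-y, a - x⟫ + ⟪-x, b - y⟫ : ℝ) : EReal) :=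
          add_le_add_left hlow _
      _ ≤ regLag lam L (a, b) := h1
      _ ≤ _ := hupp
  -- real version of the master inequality, for finite values
  have masterR : ∀ (a b c : H) (t : ℝ), L (c, b) = (t : EReal) →
      r + ‖x - zs‖ ^ 2 / (2 * lam) + lam / 2 * ‖y‖ ^ 2 + ⟪-y, a - x⟫ + ⟪-x, b - y⟫
        ≤ t + (‖a - c‖ ^ 2 / (2 * lam) + lam / 2 * ‖b‖ ^ 2) := by
    intro a b c t ht
    have h1 := master a b c
    rw [ht, ← EReal.coe_add, EReal.coe_le_coe_iff] at h1
    exact h1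
  -- identify zs = x + lam • y
  have hzs : zs = x + lam • y := by
    have h1 := masterR (zs - lam • y) y zs r hr
    have e1 : ‖zs - lam • y - zs‖ ^ 2 = lam ^ 2 * ‖y‖ ^ 2 := by
      have : zs - lam • y - zs = -(lam • y) := by abel
      rw [this, norm_neg, norm_smul, Real.norm_eq_abs, mul_pow, sq_abs]
    have e2 : ⟪-y, zs - lam • y - x⟫ = -⟪y, zs⟫ + lam * ‖y‖ ^ 2 + ⟪y, x⟫ := by
      rw [inner_neg_left, inner_sub_right, inner_sub_right, real_inner_smul_right,
        real_inner_self_eq_norm_sq]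
      ring
    have e3 : ⟪-x, y - y⟫ = 0 := by simp
    rw [e1, e2, e3] at h1
    have hsq : ‖x - zs + lam • y‖ ^ 2 ≤ 0 := by
      have e4 : ‖x - zs + lam • y‖ ^ 2
          = ‖x - zs‖ ^ 2 + 2 * (lam * ⟪x - zs, y⟫) + lam ^ 2 * ‖y‖ ^ 2 := by
        rw [norm_add_sq_real, real_inner_smul_right, norm_smul, Real.norm_eq_abs, mul_pow, sq_abs]
      have e5 : ⟪x - zs, y⟫ = ⟪y, x⟫ - ⟪y, zs⟫ := by
        rw [real_inner_comm, inner_sub_right]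
      rw [e4, e5]
      have h2 : 0 < 2 * lam := by positivity
      nlinarith [mul_le_mul_of_nonneg_right h1 h2.le,
        div_mul_cancel₀ (‖x - zs‖ ^ 2) h2.ne',
        div_mul_cancel₀ (lam ^ 2 * ‖y‖ ^ 2) h2.ne', h2]
    have h0 : x - zs + lam • y = 0 := by
      have hn : ‖x - zs + lam • y‖ = 0 := by nlinarith [norm_nonneg (x - zs + lam • y)]
      exact norm_eq_zero.mp hn
    rw [← sub_eq_zero]
    have e6 : zs - (x + lam • y) = -(x - zs + lam • y) := by abel
    rw [e6, h0, neg_zero]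
  -- main conclusion
  intro w
  obtain ⟨c, b⟩ := w
  simp only
  rcases eq_or_ne (L (c, b)) ⊤ with htop | hne
  · rw [htop]; exact le_top
  have hcb : L (c, b) = ((L (c, b)).toReal : EReal) := (EReal.coe_toReal hne (hbot _)).symm
  set t := (L (c, b)).toReal with htdef
  rw [hr, hcb, ← EReal.coe_add, EReal.coe_le_coe_iff]
  -- real goal : r + (⟪-y, c - zs⟫ + ⟪-zs, b - y⟫) ≤ t
  set P : ℝ := r + (⟪-y, c - zs⟫ + ⟪-zs, b - y⟫) with hPdef
  set C : ℝ := lam / 2 * ‖b - y‖ ^ 2 with hCdef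
  have hC : 0 ≤ C := by positivity
  have key : ∀ s : ℝ, 0 < s → s ≤ 1 → P ≤ t + C * s := by
    intro s hs hs1
    -- convexity at (zs,y), (c,b)
    have hconv := hLc (zs, y) (c, b) (1 - s) s (by linarith) hs.le (by ring)
    rw [hr, hcb, ← EReal.coe_mul, ← EReal.coe_mul, ← EReal.coe_add] at hconv
    set cs : H := (1 - s) • zs + s • c with hcsdef
    set bs : H := (1 - s) • y + s • b with hbsdef
    have hconv' : L (cs, bs) ≤ (((1 - s) * r + s * t : ℝ) : EReal) := by
      have : ((1 - s) • ((zs : H), (y : H)) + s • ((c : H), (b : H))) = (cs, bs) := by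
        simp [hcsdef, hbsdef, Prod.smul_mk, Prod.mk_add_mk]
      rwa [this] at hconv
    have hnetop : L (cs, bs) ≠ ⊤ := by
      intro h
      rw [h, top_le_iff] at hconv'
      exact EReal.coe_ne_top _ hconv'
    have hu : L (cs, bs) = ((L (cs, bs)).toReal : EReal) := (EReal.coe_toReal hnetop (hbot _)).symm
    set u := (L (cs, bs)).toReal with hudef
    have hule : u ≤ (1 - s) * r + s * t := by
      rw [hu, EReal.coe_le_coe_iff] at hconv'
      exact hconv'
    have h1 := masterR (x + s • (c - zs)) bs cs u hu
    have ea : x + s • (c - zs) - cs = x - zs := by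
      rw [hcsdef]
      module
    have eb : x + s • (c - zs) - x = s • (c - zs) := by abel
    have ec : bs - y = s • (b - y) := by rw [hbsdef]; module
    rw [ea, eb, ec] at h1
    have e1 : ⟪-y, s • (c - zs)⟫ = -(s * ⟪y, c - zs⟫) := by
      rw [inner_neg_left, real_inner_smul_right]
    have e2 : ⟪-x, s • (b - y)⟫ = -(s * ⟪x, b - y⟫) := by
      rw [inner_neg_left, real_inner_smul_right]
    have e3 : ‖bs‖ ^ 2 = ‖y‖ ^ 2 + 2 * (s * ⟪y, b - y⟫) + s ^ 2 * ‖b - y‖ ^ 2 := by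
      have : bs = y + s • (b - y) := by rw [hbsdef]; module
      rw [this, norm_add_sq_real, real_inner_smul_right, norm_smul, Real.norm_eq_abs,
        mul_pow, sq_abs]
    have e4 : ⟪x, b - y⟫ = ⟪zs, b - y⟫ - lam * ⟪y, b - y⟫ := by
      have : x = zs - lam • y := by rw [hzs]; abel
      rw [this, inner_sub_left, real_inner_smul_left]
    rw [e1, e2, e3, e4] at h1
    -- now h1 is linear-pluse-quadratic; divide by s
    have hfacts : s * P ≤ s * (t + C * s) := by
      rw [hPdef, hCdef]
      have ey : ⟪-y, c - zs⟫ = -⟪y, c - zs⟫ := by rw [inner_neg_left]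
      have ezs : ⟪-zs, b - y⟫ = -⟪zs, b - y⟫ := by rw [inner_neg_left]
      rw [ey, ezs]
      nlinarith [h1, hule]
    exact (mul_le_mul_iff_right₀ hs).mp hfacts
  -- take s → 0
  have : P ≤ t := by
    refine le_of_forall_pos_le_add fun ε hε => ?_
    rcases eq_or_lt_of_le hC with h0 | h0
    · have := key 1 one_pos le_rfl
      rw [← h0] at this
      linarith
    · have hs : 0 < min 1 (ε / C) := lt_min one_pos (by positivity)
      have h1 := key _ hs (min_le_left _ _)
      have h2 : C * min 1 (ε / C) ≤ ε := by
        calc C * min 1 (ε / C) ≤ C * (ε / C) := by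
              exact mul_le_mul_of_nonneg_left (min_le_right _ _) hC
          _ = ε := by field_simp
      linarith
  linarith [this]
end
end

section
/- Let H be a real Hilbert space and L : H × H → ℝ ∪ {+∞} a proper convex lower semicontinuous antiselfdual Lagrangian (L*(p,x) = L(−x,−p) for all (x,p)), with λ-regularization L_λ(x,p) = inf_z { L(z,p) + ‖x − z‖²/(2λ) } + (λ/2)‖p‖². Suppose x₀ ∈ Dom₁(∂L), witnessed by p̂ ∈ H with (−p̂, −x₀) ∈ ∂L(x₀, p̂). Then for every λ > 0, any y_λ ∈ H satisfying (−y_λ, −x₀) ∈ ∂L_λ(x₀, y_λ) obeys the bound ‖y_λ‖_H ≤ ‖p̂‖_H. -/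
open MeasureTheory Set
open scoped RealInnerProductSpace Classical

noncomputable section

variable {H : Type*} [NormedAddCommGroup H] [InnerProductSpace ℝ H]

/-- Lemma 3.5 (2): if `x₀ ∈ Dom₁(∂L)`, witnessed by `p̂`, then any solution
`y_λ` of `(−y_λ, −x₀) ∈ ∂L_λ(x₀, y_λ)` satisfies `‖y_λ‖ ≤ ‖p̂‖`. -/
theorem statement16 (L : H × H → EReal)
    (hLp : EProper L) (hLc : EConvexOn L) (hLl : LowerSemicontinuous L)
    (hLasd : ∀ x p : H, eConj2 L (p, x) = L (-x, -p))
    (x₀ ph : H) (hph : ESubdiff2 L (x₀, ph) (-ph, -x₀)) :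
    ∀ lam : ℝ, 0 < lam → ∀ ylam : H,
      ESubdiff2 (regLag lam L) (x₀, ylam) (-ylam, -x₀) → ‖ylam‖ ≤ ‖ph‖ := by
  intro lam hlam ylam hsub
  obtain ⟨⟨w₀, hw₀⟩, hbot⟩ := hLp
  have hcbot : L (x₀, ph) ≠ ⊥ := hbot _
  have hctop : L (x₀, ph) ≠ ⊤ := by
    intro h
    have h2 := hph w₀
    rw [h, EReal.top_add_coe] at h2
    exact hw₀ (top_le_iff.mp h2)
  set cR : ℝ := (L (x₀, ph)).toReal with hcRdef
  have hc : ((cR : ℝ) : EReal) = L (x₀, ph) := EReal.coe_toReal hctop hcbot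
  -- lower bound on each term of the infimum
  have key : ∀ z : H, ((cR - ⟪x₀, ylam - ph⟫ - lam/2 * ‖ph‖^2 : ℝ) : EReal) ≤
      L (z, ylam) + ((‖x₀ - z‖^2 / (2*lam) : ℝ) : EReal) := by
    intro z
    have h1 : L (x₀, ph) + ((⟪-ph, z - x₀⟫ + ⟪-x₀, ylam - ph⟫ : ℝ) : EReal)
        ≤ L (z, ylam) := hph (z, ylam)
    rw [← hc, ← EReal.coe_add] at h1
    have h2 : ((cR + (⟪-ph, z - x₀⟫ + ⟪-x₀, ylam - ph⟫) + ‖x₀ - z‖^2/(2*lam) : ℝ) : EReal)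
        ≤ L (z, ylam) + ((‖x₀ - z‖^2 / (2*lam) : ℝ) : EReal) := by
      rw [EReal.coe_add]
      exact add_le_add_left h1 _
    refine le_trans (EReal.coe_le_coe_iff.mpr ?_) h2
    have hi1 : ⟪ph, z - x₀⟫ ≤ ‖ph‖ * ‖z - x₀‖ := real_inner_le_norm _ _
    have hn : ‖x₀ - z‖ = ‖z - x₀‖ := norm_sub_rev _ _
    have hneg : ⟪-ph, z - x₀⟫ = -⟪ph, z - x₀⟫ := inner_neg_left _ _
    have hnz : (0:ℝ) ≤ ‖z - x₀‖ := norm_nonneg _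
    have hneg2 : ⟪-x₀, ylam - ph⟫ = -⟪x₀, ylam - ph⟫ := inner_neg_left _ _
    rw [hneg, hn, hneg2]
    have hAM : ‖ph‖ * ‖z - x₀‖ - lam/2 * ‖ph‖^2 ≤ ‖z - x₀‖^2 / (2*lam) := by
      rw [le_div_iff₀ (by positivity)]
      nlinarith [sq_nonneg (lam * ‖ph‖ - ‖z - x₀‖)]
    linarith
  have hIlow : ((cR - ⟪x₀, ylam - ph⟫ - lam/2 * ‖ph‖^2 : ℝ) : EReal) ≤
      ⨅ z : H, L (z, ylam) + ((‖x₀ - z‖^2 / (2*lam) : ℝ) : EReal) := le_iInf key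
  have hmlow : ((cR - ⟪x₀, ylam - ph⟫ - lam/2 * ‖ph‖^2 + lam/2 * ‖ylam‖^2 : ℝ) : EReal)
      ≤ regLag lam L (x₀, ylam) := by
    show _ ≤ (⨅ z : H, L (z, ylam) + ((‖x₀ - z‖^2 / (2*lam) : ℝ) : EReal)) +
      (((lam/2) * ‖ylam‖^2 : ℝ) : EReal)
    rw [show (cR - ⟪x₀, ylam - ph⟫ - lam/2 * ‖ph‖^2 + lam/2 * ‖ylam‖^2 : ℝ)
        = (cR - ⟪x₀, ylam - ph⟫ - lam/2 * ‖ph‖^2) + (lam/2) * ‖ylam‖^2 by ring,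
      EReal.coe_add]
    exact add_le_add_left hIlow _
  -- upper bound
  have hupp : regLag lam L (x₀ - lam • ylam, ph)
      ≤ ((cR + lam/2 * ‖ylam‖^2 + lam/2 * ‖ph‖^2 : ℝ) : EReal) := by
    have h3 : (⨅ z : H, L (z, ph) + ((‖(x₀ - lam • ylam) - z‖^2 / (2*lam) : ℝ) : EReal))
        ≤ ((cR + lam/2 * ‖ylam‖^2 : ℝ) : EReal) := by
      refine le_trans (iInf_le _ x₀) ?_
      rw [← hc, ← EReal.coe_add]
      apply EReal.coe_le_coe_iff.mpr
      have hns : ‖(x₀ - lam • ylam) - x₀‖ = lam * ‖ylam‖ := by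
        rw [sub_sub_cancel_left, norm_neg, norm_smul, Real.norm_eq_abs,
          abs_of_pos hlam]
      rw [hns]
      have : (lam * ‖ylam‖)^2 / (2*lam) = lam/2 * ‖ylam‖^2 := by
        field_simp
      rw [this]
    show (⨅ z : H, L (z, ph) + ((‖(x₀ - lam • ylam) - z‖^2 / (2*lam) : ℝ) : EReal)) +
      (((lam/2) * ‖ph‖^2 : ℝ) : EReal) ≤ _
    rw [show (cR + lam/2 * ‖ylam‖^2 + lam/2 * ‖ph‖^2 : ℝ)
        = (cR + lam/2 * ‖ylam‖^2) + (lam/2) * ‖ph‖^2 by ring, EReal.coe_add]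
    exact add_le_add_left h3 _
  -- subdifferential inequality of the regularized Lagrangian
  have hS : regLag lam L (x₀, ylam) +
      ((⟪-ylam, (x₀ - lam • ylam) - x₀⟫ + ⟪-x₀, ph - ylam⟫ : ℝ) : EReal)
      ≤ regLag lam L (x₀ - lam • ylam, ph) := hsub (x₀ - lam • ylam, ph)
  have hchain : ((cR - ⟪x₀, ylam - ph⟫ - lam/2 * ‖ph‖^2 + lam/2 * ‖ylam‖^2
      + (⟪-ylam, (x₀ - lam • ylam) - x₀⟫ + ⟪-x₀, ph - ylam⟫) : ℝ) : EReal)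
      ≤ ((cR + lam/2 * ‖ylam‖^2 + lam/2 * ‖ph‖^2 : ℝ) : EReal) := by
    rw [EReal.coe_add]
    exact le_trans (add_le_add_left hmlow _) (le_trans hS hupp)
  have hreal := EReal.coe_le_coe_iff.mp hchain
  have he1 : ((x₀ - lam • ylam) - x₀) = -(lam • ylam) := sub_sub_cancel_left _ _
  rw [he1] at hreal
  have he2 : ⟪-ylam, -(lam • ylam)⟫ = lam * ‖ylam‖^2 := by
    rw [inner_neg_neg, real_inner_smul_right, real_inner_self_eq_norm_sq]
  have he3 : ⟪-x₀, ph - ylam⟫ = -⟪x₀, ph - ylam⟫ := inner_neg_left _ _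
  have he4 : ⟪x₀, ylam - ph⟫ + ⟪x₀, ph - ylam⟫ = 0 := by
    rw [← inner_add_right]; simp
  rw [he2, he3] at hreal
  have hsq : ‖ylam‖^2 ≤ ‖ph‖^2 := by nlinarith
  exact le_of_pow_le_pow_left₀ two_ne_zero (norm_nonneg _) hsq
end
end

section
/- Let H be a real Hilbert space, T > 0, and L : H × H → ℝ ∪ {+∞} a proper convex lower semicontinuous antiselfdual Lagrangian (L*(p,x) = L(−x,−p)) that is uniformly convex in its first variable (there is ε > 0 with x ↦ L(x,p) − (ε/2)‖x‖² convex for each p). Let x₀ ∈ Dom₁(∂L) and let p₀ ∈ H satisfy (−p₀,−x₀) ∈ ∂L(x₀,p₀). If x̂ ∈ A²_H([0,T]) satisfies ∫₀ᵀ L(x̂(t), x̂̇(t)) dt + ½‖x̂(0)‖²_H − 2⟨x̂(0), x₀⟩ + ‖x₀‖²_H + ½‖x̂(T)‖²_H = 0, then ∫₀ᵀ ‖x̂̇(t)‖²_H dt ≤ T‖p₀‖²_H. -/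
open MeasureTheory Set
open scoped RealInnerProductSpace Classical

noncomputable section

variable {H : Type*} [NormedAddCommGroup H] [InnerProductSpace ℝ H]

/- ### Auxiliary lemmas -/

lemma le_eConj2 (F : H × H → EReal) (q z : H × H) :
    ((⟪z.1, q.1⟫ + ⟪z.2, q.2⟫ : ℝ) : EReal) - F z ≤ eConj2 F q :=
  le_iSup (fun z : H × H => ((⟪z.1, q.1⟫ + ⟪z.2, q.2⟫ : ℝ) : EReal) - F z) z

lemma lower_bound (L : H × H → EReal) (hb : ∀ z, L z ≠ ⊥)
    (hLasd : ∀ x p : H, eConj2 L (p, x) = L (-x, -p)) (x p : H) :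
    ((-⟪x, p⟫ : ℝ) : EReal) ≤ L (x, p) := by
  have hasd : eConj2 L (-p, -x) = L (x, p) := by simpa using hLasd (-x) (-p)
  have h := le_eConj2 L (-p, -x) (x, p)
  rw [hasd] at h
  by_cases htop : L (x, p) = ⊤
  · simp [htop]
  · have hr : ((L (x,p)).toReal : EReal) = L (x,p) := EReal.coe_toReal htop (hb _)
    rw [← hr] at h ⊢
    rw [← EReal.coe_sub, EReal.coe_le_coe_iff] at h
    rw [EReal.coe_le_coe_iff]
    simp only [inner_neg_right] at h
    have := real_inner_comm x p
    linarith

lemma mono_of_eq (L : H × H → EReal) (hb : ∀ z, L z ≠ ⊥)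
    (hLasd : ∀ x p : H, eConj2 L (p, x) = L (-x, -p)) {z w : H × H}
    (hz : L z = ((-⟪z.1, z.2⟫ : ℝ) : EReal)) (hw : L w = ((-⟪w.1, w.2⟫ : ℝ) : EReal)) :
    ⟪z.1 - w.1, z.2 - w.2⟫ ≤ 0 := by
  have hasd : eConj2 L (-z.2, -z.1) = L z := by
    have := hLasd (-z.1) (-z.2)
    simpa using this
  have h := le_eConj2 L (-z.2, -z.1) w
  rw [hasd, hz, hw, ← EReal.coe_sub, EReal.coe_le_coe_iff] at h
  simp only [inner_neg_right, inner_sub_left, inner_sub_right] at h ⊢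
  have h1 := real_inner_comm w.2 z.1
  have h2 := real_inner_comm w.1 z.2
  linarith

lemma base_eq (L : H × H → EReal) (hb : ∀ z, L z ≠ ⊥) (hne : ∃ z, L z ≠ ⊤)
    (hLasd : ∀ x p : H, eConj2 L (p, x) = L (-x, -p)) (x₀ p₀ : H)
    (hx₀ : ESubdiff2 L (x₀, p₀) (-p₀, -x₀)) :
    L (x₀, p₀) = ((-⟪x₀, p₀⟫ : ℝ) : EReal) := by
  obtain ⟨z1, hz1⟩ := hne
  have hfin : L (x₀, p₀) ≠ ⊤ := by
    intro htop
    have h := hx₀ z1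
    rw [htop] at h
    have : ((L z1).toReal : EReal) = L z1 := EReal.coe_toReal hz1 (hb _)
    rw [← this] at h
    simp [EReal.top_add_coe] at h
  set r := (L (x₀, p₀)).toReal with hrdef
  have hr : ((r : ℝ) : EReal) = L (x₀, p₀) := EReal.coe_toReal hfin (hb _)
  have hub : eConj2 L (-p₀, -x₀) ≤ (((-2 * ⟪x₀, p₀⟫ - r : ℝ)) : EReal) := by
    rw [eConj2]
    apply iSup_le
    intro w
    by_cases hwt : L w = ⊤
    · rw [hwt]
      simp [EReal.sub_top]
    · have hwr : ((L w).toReal : EReal) = L w := EReal.coe_toReal hwt (hb _)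
      have h := hx₀ w
      rw [← hr, ← hwr, ← EReal.coe_add, EReal.coe_le_coe_iff] at h
      rw [← hwr, ← EReal.coe_sub, EReal.coe_le_coe_iff]
      simp only [inner_neg_left, inner_neg_right, inner_sub_right] at h ⊢
      have h1 := real_inner_comm w.1 p₀
      have h2 := real_inner_comm w.2 x₀
      have h3 := real_inner_comm x₀ p₀
      linarith
  have hasd : eConj2 L (-p₀, -x₀) = L (x₀, p₀) := by simpa using hLasd (-x₀) (-p₀)
  rw [hasd, ← hr, EReal.coe_le_coe_iff] at hub
  have hlb := lower_bound L hb hLasd x₀ p₀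
  rw [← hr, EReal.coe_le_coe_iff] at hlb
  rw [← hr, EReal.coe_eq_coe_iff]
  linarith

lemma aux_arith {M p t I : ℝ} (hM : 0 ≤ M) (hp : 0 ≤ p) (ht : 0 ≤ t)
    (h1 : M^2 ≤ 2*p*I) (h2 : I ≤ M*t) : M ≤ 2*p*t := by
  rcases eq_or_lt_of_le hM with h | h
  · nlinarith
  · nlinarith

lemma keyK [CompleteSpace H] {g F : ℝ → H} {a b : ℝ} (hab : a ≤ b)
    (hg : IntegrableOn g (Ioc a b))
    (hF : ∀ t ∈ Icc a b, F t = F a + ∫ s in a..t, g s) :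
    ∫ t in Ioc a b, ⟪F t, g t⟫ = 1/2 * ‖F b‖^2 - 1/2 * ‖F a‖^2 := by
  set ν := volume.restrict (Ioc a b) with hν
  set c := F a with hc
  set I := ∫ s in Ioc a b, g s with hI
  set P : ℝ → H := fun t => ∫ s in Ioc a t, g s with hPdef
  have hFP : ∀ t ∈ Icc a b, F t = c + P t := by
    intro t ht
    rw [hF t ht, intervalIntegral.integral_of_le ht.1]
  have hgm : AEStronglyMeasurable g ν := hg.1
  have hgnorm : Integrable (fun t => ‖g t‖) ν := hg.norm
  set B := ∫ t in Ioc a b, ‖g t‖ with hB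
  have hPle : ∀ t ∈ Ioc a b, ‖P t‖ ≤ B := by
    intro t ht
    calc ‖P t‖ ≤ ∫ s in Ioc a t, ‖g s‖ := norm_integral_le_integral_norm _
      _ ≤ B := by
          apply setIntegral_mono_set hgnorm
          · exact Filter.Eventually.of_forall fun s => norm_nonneg _
          · exact HasSubset.Subset.eventuallyLE (Ioc_subset_Ioc le_rfl ht.2)
  -- continuity / measurability of P
  have hPc : ContinuousOn P (Icc a b) :=
    intervalIntegral.continuousOn_primitive (by rwa [integrableOn_Icc_iff_integrableOn_Ioc])
  have hPm : AEStronglyMeasurable P ν :=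
    (hPc.mono Ioc_subset_Icc_self).aestronglyMeasurable measurableSet_Ioc
  have hPg_int : Integrable (fun t => ⟪P t, g t⟫) ν := by
    refine Integrable.mono' (hgnorm.const_mul B) (hPm.inner hgm) ?_
    rw [ae_restrict_iff' measurableSet_Ioc]
    refine Filter.Eventually.of_forall fun t ht => ?_
    calc ‖⟪P t, g t⟫‖ ≤ ‖P t‖ * ‖g t‖ := norm_inner_le_norm _ _
      _ ≤ B * ‖g t‖ := by
          have := hPle t ht
          have h0 : (0:ℝ) ≤ ‖g t‖ := norm_nonneg _
          nlinarith [norm_nonneg (P t)]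
  -- product measurability and integrability
  have hkm : AEStronglyMeasurable (fun p : ℝ × ℝ => ⟪g p.1, g p.2⟫) (ν.prod ν) :=
    (hgm.comp_fst).inner (hgm.comp_snd)
  have hk_int : Integrable (fun p : ℝ × ℝ => ⟪g p.1, g p.2⟫) (ν.prod ν) := by
    refine Integrable.mono' (hgnorm.mul_prod hgnorm) hkm ?_
    refine Filter.Eventually.of_forall fun p => ?_
    simpa using abs_real_inner_le_norm (g p.1) (g p.2)
  set D : Set (ℝ × ℝ) := {p | p.1 ≤ p.2} with hD
  have hDm : MeasurableSet D := measurableSet_le measurable_fst measurable_snd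
  set h : ℝ × ℝ → ℝ := D.indicator (fun p => ⟪g p.1, g p.2⟫) with hh
  have hh_int : Integrable h (ν.prod ν) := hk_int.indicator hDm
  have hswap_int : Integrable (fun p : ℝ × ℝ => h p.swap) (ν.prod ν) := by
    have := hh_int.swap
    exact this
  have hswapeq : (∫ p, h p.swap ∂(ν.prod ν)) = ∫ p, h p ∂(ν.prod ν) := integral_prod_swap h
  -- the diagonal is null
  have hdiag : (ν.prod ν) {p : ℝ × ℝ | p.1 = p.2} = 0 := by
    have hmeas : MeasurableSet {p : ℝ × ℝ | p.1 = p.2} :=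
      measurableSet_eq_fun measurable_fst measurable_snd
    rw [Measure.prod_apply hmeas]
    have hz : ∀ x : ℝ, ν (Prod.mk x ⁻¹' {p : ℝ × ℝ | p.1 = p.2}) = 0 := by
      intro x
      have hxx : (Prod.mk x ⁻¹' {p : ℝ × ℝ | p.1 = p.2}) = {x} := by
        ext y; simp [eq_comm]
      rw [hxx, hν, Measure.restrict_apply (measurableSet_singleton x)]
      exact measure_mono_null inter_subset_left (measure_singleton x)
    simp [hz]
  have hsum : ∀ᵐ p ∂(ν.prod ν), h p + h p.swap = ⟪g p.1, g p.2⟫ := by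
    have hae : ∀ᵐ p ∂(ν.prod ν), p.1 ≠ (p.2:ℝ) := by
      rw [ae_iff]
      simpa using hdiag
    filter_upwards [hae] with p hp
    have hps : p.swap = (p.2, p.1) := rfl
    rcases lt_or_gt_of_ne hp with hlt | hgt
    · have h1 : p ∈ D := le_of_lt hlt
      have h2 : (p.2, p.1) ∉ D := not_le.mpr hlt
      rw [hh, hps, Set.indicator_of_mem h1, Set.indicator_of_notMem h2, add_zero]
    · have h1 : p ∉ D := not_le.mpr hgt
      have h2 : (p.2, p.1) ∈ D := le_of_lt hgt
      rw [hh, hps, Set.indicator_of_notMem h1, Set.indicator_of_mem h2, zero_add]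
      exact real_inner_comm (g p.1) (g p.2)
  have htotal : ∫ p : ℝ × ℝ, ⟪g p.1, g p.2⟫ ∂(ν.prod ν) = ‖I‖^2 := by
    rw [integral_prod _ hk_int]
    have hstep : ∀ s : ℝ, (∫ t, ⟪g s, g t⟫ ∂ν) = ⟪g s, I⟫ := fun s => integral_inner hg (g s)
    calc (∫ s, ∫ t, ⟪g s, g t⟫ ∂ν ∂ν) = ∫ s, ⟪g s, I⟫ ∂ν := by
          exact integral_congr_ae (Filter.Eventually.of_forall fun s => hstep s)
      _ = ∫ s, ⟪I, g s⟫ ∂ν := integral_congr_ae (Filter.Eventually.of_forall fun s => real_inner_comm _ _)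
      _ = ⟪I, I⟫ := integral_inner hg I
      _ = ‖I‖^2 := real_inner_self_eq_norm_sq I
  have h_half : ∫ p, h p ∂(ν.prod ν) = 1/2 * ‖I‖^2 := by
    have hsum' : (∫ p, h p ∂(ν.prod ν)) + ∫ p, h p.swap ∂(ν.prod ν) = ‖I‖^2 := by
      rw [← integral_add hh_int hswap_int, ← htotal]
      exact integral_congr_ae hsum
    rw [hswapeq] at hsum'
    linarith
  -- identify J with ∫ h
  have hJ : (∫ t, ⟪P t, g t⟫ ∂ν) = ∫ p, h p ∂(ν.prod ν) := by
    have hpt : ∀ t ∈ Ioc a b, ⟪P t, g t⟫ = ∫ s, h (s, t) ∂ν := by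
      intro t ht
      have hIic : Iic t ∩ Ioc a b = Ioc a t := by
        ext s
        simp only [mem_inter_iff, mem_Iic, mem_Ioc]
        constructor
        · rintro ⟨h1, h2, _⟩; exact ⟨h2, h1⟩
        · rintro ⟨h1, h2⟩; exact ⟨h2, h1, h2.trans ht.2⟩
      have hind : (fun s => h (s, t)) = (Iic t).indicator (fun s => ⟪g s, g t⟫) := by
        ext s
        by_cases hst : s ≤ t
        · have hm1 : (s, t) ∈ D := hst
          rw [hh, Set.indicator_of_mem hm1, Set.indicator_of_mem (mem_Iic.mpr hst)]
        · have hm1 : (s, t) ∉ D := hst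
          rw [hh, Set.indicator_of_notMem hm1,
            Set.indicator_of_notMem (by simpa using hst)]
      have heq1 : (∫ s, h (s, t) ∂ν) = ∫ s in Iic t, ⟪g s, g t⟫ ∂ν := by
        rw [← integral_indicator measurableSet_Iic, ← hind]
      rw [heq1, hν, Measure.restrict_restrict measurableSet_Iic, hIic]
      have h1 : (∫ s in Ioc a t, ⟪g t, g s⟫) = ⟪g t, P t⟫ :=
        integral_inner (hg.mono_set (Ioc_subset_Ioc le_rfl ht.2)) (g t)
      have h2 : (∫ s in Ioc a t, ⟪g s, g t⟫) = ∫ s in Ioc a t, ⟪g t, g s⟫ :=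
        integral_congr_ae (Filter.Eventually.of_forall fun s => real_inner_comm _ _)
      rw [h2, h1, real_inner_comm]
    have hcongr : (∫ t, ⟪P t, g t⟫ ∂ν) = ∫ t, (∫ s, h (s, t) ∂ν) ∂ν := by
      rw [hν]
      exact setIntegral_congr_fun measurableSet_Ioc fun t ht => hpt t ht
    rw [hcongr]
    have huncurry : Integrable (Function.uncurry fun t s => h (s, t)) (ν.prod ν) := by
      have : (Function.uncurry fun t s => h (s, t)) = fun p : ℝ × ℝ => h p.swap := rfl
      rw [this]; exact hswap_int
    have := integral_integral (f := fun t s => h (s, t)) (μ := ν) (ν := ν) huncurry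
    rw [this]
    have : (∫ z : ℝ × ℝ, h (z.2, z.1) ∂(ν.prod ν)) = ∫ p, h p.swap ∂(ν.prod ν) := rfl
    rw [this, hswapeq]
  -- assemble
  have hsplit : (∫ t, ⟪F t, g t⟫ ∂ν) = (∫ t, ⟪c, g t⟫ ∂ν) + ∫ t, ⟪P t, g t⟫ ∂ν := by
    rw [← integral_add (hg.const_inner c) hPg_int, hν]
    refine setIntegral_congr_fun measurableSet_Ioc fun t ht => ?_
    rw [hFP t (Ioc_subset_Icc_self ht), inner_add_left]
  have hcI : (∫ t, ⟪c, g t⟫ ∂ν) = ⟪c, I⟫ := integral_inner hg c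
  have hFb : F b = c + I := by
    have := hFP b ⟨hab, le_refl b⟩
    rwa [hPdef] at this
  rw [show (∫ t in Ioc a b, ⟪F t, g t⟫) = ∫ t, ⟪F t, g t⟫ ∂ν from rfl]
  rw [hsplit, hcI, hJ, h_half, hFb]
  have hexp : ‖c + I‖^2 = ‖c‖^2 + 2 * ⟪c, I⟫ + ‖I‖^2 := norm_add_sq_real c I
  linarith

set_option maxHeartbeats 2000000 in
/-- Lemma 3.6: a zero of the lifted action functional satisfies the
a priori bound `∫₀ᵀ ‖x̂'(t)‖² dt ≤ T ‖p₀‖²`. -/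
theorem statement17 [CompleteSpace H] (T : ℝ) (hT : 0 < T) (L : H × H → EReal)
    (hLp : EProper L) (hLc : EConvexOn L) (hLl : LowerSemicontinuous L)
    (hLasd : ∀ x p : H, eConj2 L (p, x) = L (-x, -p))
    (hunif : ∃ ε : ℝ, 0 < ε ∧ ∀ p : H, EConvexOn
      (fun x : H => L (x, p) - (((ε/2) * ‖x‖^2 : ℝ) : EReal)))
    (x₀ p₀ : H) (hx₀ : ESubdiff2 L (x₀, p₀) (-p₀, -x₀))
    (xh xh' : ℝ → H) (harc : IsArc T 2 xh xh')
    (hzero : eIntegral (volume.restrict (Icc (0:ℝ) T)) (fun t => L (xh t, xh' t)) +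
      (((1/2) * ‖xh 0‖^2 - 2 * ⟪xh 0, x₀⟫ + ‖x₀‖^2 + (1/2) * ‖xh T‖^2 : ℝ) : EReal) = 0) :
    ∫ t in Icc (0:ℝ) T, ‖xh' t‖^2 ≤ T * ‖p₀‖^2 := by
  obtain ⟨hmem, hrep⟩ := harc
  set μ := volume.restrict (Icc (0:ℝ) T) with hμ
  have hbot := hLp.2
  have hnetop := hLp.1
  -- integrability of xh'
  have h2 : (ENNReal.ofReal (2:ℝ)) = 2 := by
    rw [ENNReal.ofReal_ofNat]
  rw [h2] at hmem
  have hfinμ : IsFiniteMeasure μ := by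
    constructor
    rw [hμ, Measure.restrict_apply_univ, Real.volume_Icc]
    exact ENNReal.ofReal_lt_top
  have hgint : Integrable xh' μ := hmem.integrable (by norm_num)
  have hgIcc : IntegrableOn xh' (Icc 0 T) := hgint
  have hgIoc : IntegrableOn xh' (Ioc 0 T) := hgIcc.mono_set Ioc_subset_Icc_self
  -- continuity of xh on [0,T]
  have hxc : ContinuousOn xh (Icc 0 T) := by
    have hc : ContinuousOn (fun t => xh 0 + ∫ s in Ioc 0 t, xh' s) (Icc 0 T) :=
      continuousOn_const.add (intervalIntegral.continuousOn_primitive hgIcc)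
    apply hc.congr
    intro t ht
    rw [hrep t ht, intervalIntegral.integral_of_le ht.1]
  have hxm : AEStronglyMeasurable xh μ := hxc.aestronglyMeasurable measurableSet_Icc
  -- ⟪xh, xh'⟫ is integrable
  have hinner : Integrable (fun t => ⟪xh t, xh' t⟫) μ := by
    obtain ⟨Bx, hBx⟩ := IsCompact.exists_bound_of_continuousOn isCompact_Icc hxc
    refine Integrable.mono' (hgint.norm.const_mul Bx) (hxm.inner hgint.1) ?_
    rw [hμ, ae_restrict_iff' measurableSet_Icc]
    refine Filter.Eventually.of_forall fun t ht => ?_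
    calc ‖⟪xh t, xh' t⟫‖ ≤ ‖xh t‖ * ‖xh' t‖ := norm_inner_le_norm _ _
      _ ≤ Bx * ‖xh' t‖ := mul_le_mul_of_nonneg_right (hBx t ht) (norm_nonneg _)
  -- extraction from hzero
  set C : ℝ := (1/2) * ‖xh 0‖^2 - 2 * ⟪xh 0, x₀⟫ + ‖x₀‖^2 + (1/2) * ‖xh T‖^2 with hC
  have hcond : Integrable (fun t => (L (xh t, xh' t)).toReal) μ ∧
      (∀ᵐ t ∂μ, L (xh t, xh' t) = (((L (xh t, xh' t)).toReal : ℝ) : EReal)) := by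
    by_contra hcon
    rw [eIntegral, if_neg hcon] at hzero
    rw [EReal.top_add_coe] at hzero
    exact EReal.top_ne_zero hzero
  obtain ⟨hint, hae⟩ := hcond
  have hIeq : ∫ t, (L (xh t, xh' t)).toReal ∂μ = -C := by
    rw [eIntegral, if_pos ⟨hint, hae⟩, ← EReal.coe_add, ← EReal.coe_zero,
      EReal.coe_eq_coe_iff] at hzero
    linarith
  -- the nonnegative defect φ
  set φ : ℝ → ℝ := fun t => (L (xh t, xh' t)).toReal + ⟪xh t, xh' t⟫ with hφ
  have hφint : Integrable φ μ := hint.add hinner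
  have hφpos : 0 ≤ᵐ[μ] φ := by
    filter_upwards [hae] with t ht
    have hlb := lower_bound L hbot hLasd (xh t) (xh' t)
    rw [ht, EReal.coe_le_coe_iff] at hlb
    simp only [hφ, Pi.zero_apply]
    linarith
  -- value of ∫ ⟪xh, xh'⟫
  have hK : ∫ t in Ioc (0:ℝ) T, ⟪xh t, xh' t⟫ = 1/2 * ‖xh T‖^2 - 1/2 * ‖xh 0‖^2 :=
    keyK (le_of_lt hT) hgIoc hrep
  have hKμ : ∫ t, ⟪xh t, xh' t⟫ ∂μ = 1/2 * ‖xh T‖^2 - 1/2 * ‖xh 0‖^2 := by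
    rw [hμ, ← hK]
    exact integral_Icc_eq_integral_Ioc
  have hφval : ∫ t, φ t ∂μ = -(‖xh 0 - x₀‖^2) := by
    rw [hφ]
    rw [integral_add hint hinner, hIeq, hKμ, hC]
    have := norm_sub_sq_real (xh 0) x₀
    linarith
  have hφval0 : ∫ t, φ t ∂μ = 0 ∧ xh 0 = x₀ := by
    have hpos : 0 ≤ ∫ t, φ t ∂μ := integral_nonneg_of_ae hφpos
    rw [hφval] at hpos
    have h0 : ‖xh 0 - x₀‖^2 = 0 := le_antisymm (by linarith) (by positivity)
    have : ‖xh 0 - x₀‖ = 0 := by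
      have := sq_eq_zero_iff.mp h0
      exact this
    constructor
    · rw [hφval, h0, neg_zero]
    · rwa [norm_sub_eq_zero_iff] at this
  have hstart : xh 0 = x₀ := hφval0.2
  have hφzero : φ =ᵐ[μ] 0 := by
    rw [← integral_eq_zero_iff_of_nonneg_ae hφpos hφint]
    exact hφval0.1
  -- the flow property
  have hflow : ∀ᵐ t ∂μ, L (xh t, xh' t) = ((-⟪xh t, xh' t⟫ : ℝ) : EReal) := by
    filter_upwards [hae, hφzero] with t h1 h2
    have : (L (xh t, xh' t)).toReal = -⟪xh t, xh' t⟫ := by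
      simp only [hφ, Pi.zero_apply] at h2
      linarith [h2]
    rw [h1, this]

  -- pointwise "good" predicate
  set Good : ℝ → Prop :=
    fun t => t ∈ Icc (0:ℝ) T ∧ L (xh t, xh' t) = ((-⟪xh t, xh' t⟫ : ℝ) : EReal) with hGooddef
  have hGood : ∀ᵐ t ∂(volume : Measure ℝ), t ∈ Icc (0:ℝ) T → Good t := by
    have h1 : ∀ᵐ t ∂(volume : Measure ℝ), t ∈ Icc (0:ℝ) T →
        L (xh t, xh' t) = ((-⟪xh t, xh' t⟫ : ℝ) : EReal) := by
      rw [← ae_restrict_iff' measurableSet_Icc]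
      exact hflow
    filter_upwards [h1] with t ht hmem
    exact ⟨hmem, ht hmem⟩
  have hLbase : L (x₀, p₀) = ((-⟪x₀, p₀⟫ : ℝ) : EReal) :=
    base_eq L hbot hnetop hLasd x₀ p₀ hx₀
  have hmono0 : ∀ t, Good t → ⟪xh t - x₀, xh' t - p₀⟫ ≤ 0 := by
    intro t ht
    exact mono_of_eq L hbot hLasd (z := (xh t, xh' t)) (w := (x₀, p₀)) ht.2 hLbase
  have hmono2 : ∀ s t, Good s → Good t → ⟪xh s - xh t, xh' s - xh' t⟫ ≤ 0 := by
    intro s t hs ht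
    exact mono_of_eq L hbot hLasd (z := (xh s, xh' s)) (w := (xh t, xh' t)) hs.2 ht.2
  -- the squared-distance identity
  have hwid : ∀ t ∈ Icc (0:ℝ) T,
      ‖xh t - x₀‖^2 = 2 * ∫ s in Ioc (0:ℝ) t, ⟪xh s - x₀, xh' s⟫ := by
    intro t ht
    have hFt : ∀ s ∈ Icc (0:ℝ) t,
        xh s - x₀ = (xh 0 - x₀) + ∫ σ in (0:ℝ)..s, xh' σ := by
      intro s hs
      have h1 := hrep s (Icc_subset_Icc le_rfl ht.2 hs)
      rw [h1]
      abel
    have hkk := keyK (H := H) (g := xh') (F := fun s => xh s - x₀) ht.1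
      (hgIoc.mono_set (Ioc_subset_Ioc le_rfl ht.2)) hFt
    rw [hstart, sub_self, norm_zero] at hkk
    rw [hkk]
    ring
  set u : ℝ → ℝ := fun t => ‖xh t - x₀‖ with hu
  have huc : ContinuousOn u (Icc 0 T) := (hxc.sub continuousOn_const).norm
  have huint : IntegrableOn u (Icc 0 T) := huc.integrableOn_compact isCompact_Icc
  have hip_int : IntegrableOn (fun s => ⟪xh s - x₀, xh' s⟫) (Icc 0 T) := by
    have heq : (fun s => ⟪xh s - x₀, xh' s⟫) = fun s => ⟪xh s, xh' s⟫ - ⟪x₀, xh' s⟫ := by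
      ext s; rw [inner_sub_left]
    rw [IntegrableOn, heq, ← hμ]
    exact hinner.sub (hgint.const_inner x₀)
  have hstepD : ∀ t ∈ Icc (0:ℝ) T,
      ‖xh t - x₀‖^2 ≤ 2 * ‖p₀‖ * ∫ s in Ioc (0:ℝ) t, u s := by
    intro t ht
    rw [hwid t ht]
    have hsub : Ioc (0:ℝ) t ⊆ Icc (0:ℝ) T := fun s hs => ⟨le_of_lt hs.1, hs.2.trans ht.2⟩
    have hmono_int : (∫ s in Ioc (0:ℝ) t, ⟪xh s - x₀, xh' s⟫)
        ≤ ∫ s in Ioc (0:ℝ) t, ‖p₀‖ * u s := by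
      apply integral_mono_ae (hip_int.mono_set hsub) ((huint.mono_set hsub).const_mul ‖p₀‖)
      filter_upwards [ae_restrict_of_ae hGood, ae_restrict_mem measurableSet_Ioc]
        with s hs hmem
      have hG := hs (hsub hmem)
      have h1 := hmono0 s hG
      have h2 : ⟪xh s - x₀, xh' s⟫ = ⟪xh s - x₀, p₀⟫ + ⟪xh s - x₀, xh' s - p₀⟫ := by
        rw [← inner_add_right]
        congr 1
        abel
      have h3 : ⟪xh s - x₀, p₀⟫ ≤ ‖xh s - x₀‖ * ‖p₀‖ := real_inner_le_norm _ _
      have : u s = ‖xh s - x₀‖ := rfl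
      rw [this] at *
      nlinarith [norm_nonneg (xh s - x₀), norm_nonneg p₀]
    rw [MeasureTheory.integral_const_mul] at hmono_int
    linarith
  -- iteratively improving a priori bound:  u t ≤ a * t
  have hiter : ∀ a : ℝ, 0 ≤ a → (∀ t ∈ Icc (0:ℝ) T, u t ≤ a * t) →
      ∀ t ∈ Icc (0:ℝ) T, u t ≤ Real.sqrt (‖p₀‖ * a) * t := by
    intro a ha hind t ht
    have hsub : Ioc (0:ℝ) t ⊆ Icc (0:ℝ) T := fun s hs => ⟨le_of_lt hs.1, hs.2.trans ht.2⟩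
    have h1 : (∫ s in Ioc (0:ℝ) t, u s) ≤ ∫ s in Ioc (0:ℝ) t, a * s := by
      apply setIntegral_mono_on (huint.mono_set hsub)
        ((continuous_const.mul continuous_id).integrableOn_Ioc)
        measurableSet_Ioc
      intro s hs
      exact hind s (hsub hs)
    have h2 : (∫ s in Ioc (0:ℝ) t, a * s) = a * (t^2/2) := by
      rw [← intervalIntegral.integral_of_le ht.1, intervalIntegral.integral_const_mul,
        integral_id]
      ring
    have h3 := hstepD t ht
    have h4 : u t^2 ≤ (‖p₀‖ * a) * t^2 := by
      have : u t ^ 2 = ‖xh t - x₀‖^2 := rfl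
      rw [this]
      nlinarith [norm_nonneg p₀]
    have h5 : u t ≤ Real.sqrt ((‖p₀‖ * a) * t^2) := Real.le_sqrt_of_sq_le h4
    calc u t ≤ Real.sqrt ((‖p₀‖ * a) * t^2) := h5
      _ = Real.sqrt (‖p₀‖ * a) * t := by
          rw [Real.sqrt_mul (by positivity), Real.sqrt_sq ht.1]

  have hbase : ∀ t ∈ Icc (0:ℝ) T, u t ≤ (2*‖p₀‖) * t := by
    intro t ht
    obtain ⟨s₀, hs₀mem, hs₀max⟩ := isCompact_Icc.exists_isMaxOn
      (nonempty_Icc.mpr ht.1) (huc.mono (Icc_subset_Icc le_rfl ht.2))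
    set M := u s₀ with hM
    have hM0 : (0:ℝ) ≤ M := norm_nonneg _
    have hut : u t ≤ M := hs₀max (mem_Icc.mpr ⟨ht.1, le_refl t⟩)
    have hs₀Icc : s₀ ∈ Icc (0:ℝ) T := Icc_subset_Icc le_rfl ht.2 hs₀mem
    have hw := hstepD s₀ hs₀Icc
    have hsub : Ioc (0:ℝ) s₀ ⊆ Icc (0:ℝ) t := fun s hs => ⟨le_of_lt hs.1, hs.2.trans hs₀mem.2⟩
    have hIu : (∫ s in Ioc (0:ℝ) s₀, u s) ≤ M * s₀ := by
      have hle : (∫ s in Ioc (0:ℝ) s₀, u s) ≤ ∫ s in Ioc (0:ℝ) s₀, M := by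
        apply setIntegral_mono_on
          (huint.mono_set fun s hs => Icc_subset_Icc le_rfl ht.2 (hsub hs))
          (integrableOn_const measure_Ioc_lt_top.ne) measurableSet_Ioc
        intro s hs
        exact hs₀max (hsub hs)
      have hs₀0 : (0:ℝ) ≤ s₀ := hs₀mem.1
      have : (∫ s in Ioc (0:ℝ) s₀, (M:ℝ)) = M * s₀ := by
        rw [setIntegral_const, measureReal_def, Real.volume_Ioc, smul_eq_mul,
          ENNReal.toReal_ofReal (by linarith)]
        ring
      linarith
    have hMle : M ≤ 2*‖p₀‖*t := by
      refine aux_arith hM0 (norm_nonneg p₀) ht.1 hw ?_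
      have h2 : M * s₀ ≤ M * t := mul_le_mul_of_nonneg_left hs₀mem.2 hM0
      linarith
    linarith
  -- the iteration sequence
  set A : ℕ → ℝ := fun n => Nat.rec (2*‖p₀‖) (fun _ a => Real.sqrt (‖p₀‖ * a)) n with hA
  have hA0 : A 0 = 2*‖p₀‖ := rfl
  have hAsucc : ∀ n, A (n+1) = Real.sqrt (‖p₀‖ * A n) := fun n => rfl
  have hAnn : ∀ n, 0 ≤ A n := by
    intro n
    cases n with
    | zero => rw [hA0]; positivity
    | succ n => rw [hAsucc]; exact Real.sqrt_nonneg _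
  have hAbound : ∀ n, ∀ t ∈ Icc (0:ℝ) T, u t ≤ A n * t := by
    intro n
    induction n with
    | zero => exact hbase
    | succ n ih =>
        intro t ht
        rw [hAsucc]
        exact hiter (A n) (hAnn n) ih t ht
  have hAval : ∀ n, A n = ‖p₀‖ * 2 ^ ((1:ℝ)/2^n) := by
    intro n
    induction n with
    | zero =>
        rw [hA0]
        have h00 : ((1:ℝ)/2^(0:ℕ)) = 1 := by norm_num
        rw [h00, Real.rpow_one]
        ring
    | succ n ih =>
        rw [hAsucc, ih]
        rw [show ‖p₀‖ * (‖p₀‖ * 2 ^ ((1:ℝ)/2^n)) = ‖p₀‖^2 * 2 ^ ((1:ℝ)/2^n) by ring]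
        rw [Real.sqrt_mul (by positivity), Real.sqrt_sq (norm_nonneg _)]
        congr 1
        rw [Real.sqrt_eq_rpow, ← Real.rpow_mul (by norm_num : (0:ℝ) ≤ 2)]
        congr 1
        rw [pow_succ]
        field_simp
  have hDbound : ∀ t ∈ Icc (0:ℝ) T, u t ≤ ‖p₀‖ * t := by
    intro t ht
    have hlim : Filter.Tendsto (fun n : ℕ => A n * t) Filter.atTop (nhds (‖p₀‖ * t)) := by
      have h1 : Filter.Tendsto (fun n : ℕ => ((1:ℝ)/2^n)) Filter.atTop (nhds 0) := by
        simp only [one_div, ← inv_pow]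
        exact tendsto_pow_atTop_nhds_zero_of_lt_one (by norm_num) (by norm_num)
      have h2 : Filter.Tendsto (fun x : ℝ => ‖p₀‖ * 2 ^ x * t) (nhds 0) (nhds (‖p₀‖ * t)) := by
        have hc : Continuous fun x : ℝ => ‖p₀‖ * 2 ^ x * t := by
          have hc2 : Continuous fun x : ℝ => (2:ℝ) ^ x := by
            have h := Real.continuous_exp.comp ((continuous_const (y := Real.log 2)).mul continuous_id)
            have heq : (fun x : ℝ => (2:ℝ) ^ x) = fun x : ℝ => Real.exp (Real.log 2 * x) := by
              ext x
              rw [Real.rpow_def_of_pos (by norm_num : (0:ℝ) < 2)]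
            rw [heq]
            exact h
          exact (continuous_const.mul hc2).mul continuous_const
        have := hc.tendsto 0
        simpa [Real.rpow_zero] using this
      have := h2.comp h1
      apply this.congr
      intro n
      simp only [Function.comp_apply]
      rw [hAval n]
    exact ge_of_tendsto' hlim (fun n => hAbound n t ht)

  have hII : ∀ a b : ℝ, 0 ≤ a → a ≤ b → b ≤ T → IntervalIntegrable xh' volume a b := by
    intro a b ha hab hb
    rw [intervalIntegrable_iff_integrableOn_Ioc_of_le hab]
    exact hgIoc.mono_set (fun s hs => ⟨lt_of_le_of_lt ha hs.1, hs.2.trans hb⟩)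
  have hshift : ∀ h t : ℝ, 0 ≤ h → 0 ≤ t → t + h ≤ T →
      ‖xh (t+h) - xh t‖ ≤ ‖p₀‖ * h := by
    intro h t hh ht0 htT
    have hhT : h ≤ T := by linarith
    have hFt : ∀ s ∈ Icc (0:ℝ) t, xh (s+h) - xh s
        = (xh (0+h) - xh 0) + ∫ σ in (0:ℝ)..s, (xh' (σ+h) - xh' σ) := by
      intro s hs
      have hs0 : (0:ℝ) ≤ s := hs.1
      have hst : s ≤ t := hs.2
      have hsh : s + h ≤ T := by linarith
      have e1 := hrep (s+h) ⟨by linarith, hsh⟩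
      have e2 := hrep s ⟨hs0, by linarith⟩
      have e3 : (∫ σ in (0:ℝ)..(s+h), xh' σ)
          = (∫ σ in (0:ℝ)..h, xh' σ) + ∫ σ in h..(s+h), xh' σ :=
        (intervalIntegral.integral_add_adjacent_intervals (hII 0 h le_rfl hh hhT)
          (hII h (s+h) hh (by linarith) hsh)).symm
      have e4 : (∫ σ in (0:ℝ)..s, xh' (σ+h)) = ∫ σ in h..(s+h), xh' σ := by
        have := intervalIntegral.integral_comp_add_right (a := 0) (b := s) xh' h
        simpa using this
      have hcomp : IntervalIntegrable (fun σ => xh' (σ+h)) volume 0 s := by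
        have h1 := (hII h (s+h) hh (by linarith) hsh).comp_add_right h
        simpa using h1
      have e5 : (∫ σ in (0:ℝ)..s, (xh' (σ+h) - xh' σ))
          = (∫ σ in (0:ℝ)..s, xh' (σ+h)) - ∫ σ in (0:ℝ)..s, xh' σ :=
        intervalIntegral.integral_sub hcomp (hII 0 s le_rfl hs0 (by linarith))
      have e6 := hrep h ⟨hh, hhT⟩
      have hza : (0:ℝ) + h = h := zero_add h
      calc xh (s+h) - xh s
          = (∫ σ in (0:ℝ)..(s+h), xh' σ) - ∫ σ in (0:ℝ)..s, xh' σ := by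
            rw [e1, e2]; abel
        _ = (xh (0+h) - xh 0) + ∫ σ in (0:ℝ)..s, (xh' (σ+h) - xh' σ) := by
            rw [e5, e4, e3, hza, e6]; abel
    have hcomp : IntervalIntegrable (fun σ => xh' (σ+h)) volume 0 t := by
      have h1 := (hII h (t+h) hh (by linarith) htT).comp_add_right h
      simpa using h1
    have hgh_int : IntegrableOn (fun σ => xh' (σ+h) - xh' σ) (Ioc 0 t) := by
      have := hcomp.sub (hII 0 t le_rfl ht0 (by linarith))
      rwa [intervalIntegrable_iff_integrableOn_Ioc_of_le ht0] at this
    have hK2 := keyK (g := fun σ => xh' (σ+h) - xh' σ) (F := fun s => xh (s+h) - xh s)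
      ht0 hgh_int hFt
    simp only [zero_add] at hK2
    have hneg : (∫ s in Ioc (0:ℝ) t, ⟪xh (s+h) - xh s, xh' (s+h) - xh' s⟫) ≤ 0 := by
      apply integral_nonpos_of_ae
      have hGoodh : ∀ᵐ s ∂(volume : Measure ℝ), (s+h) ∈ Icc (0:ℝ) T → Good (s+h) := by
        rw [ae_iff] at hGood ⊢
        have hpre : {s : ℝ | ¬((s+h) ∈ Icc (0:ℝ) T → Good (s+h))}
            = (fun s => s + h) ⁻¹' {σ | ¬(σ ∈ Icc (0:ℝ) T → Good σ)} := rfl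
        rw [hpre, measure_preimage_add_right]
        exact hGood
      filter_upwards [ae_restrict_of_ae hGood, ae_restrict_of_ae hGoodh,
        ae_restrict_mem measurableSet_Ioc] with s h1 h2 hmem
      have hG1 : Good s := h1 ⟨hmem.1.le, by linarith [hmem.2]⟩
      have hG2 : Good (s+h) := h2 ⟨by linarith [hmem.1.le], by linarith [hmem.2]⟩
      have := hmono2 (s+h) s hG2 hG1
      simpa using this
    rw [hK2] at hneg
    have hb1 : ‖xh h - xh 0‖ ≤ ‖p₀‖ * h := by
      rw [hstart]
      exact hDbound h ⟨hh, hhT⟩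
    have hn1 := norm_nonneg (xh (t+h) - xh t)
    have hn2 := norm_nonneg (xh h - xh 0)
    nlinarith [mul_nonneg (norm_nonneg p₀) hh]

  -- a.e. bound on the derivative, via Lebesgue differentiation
  have hg_bound : ∀ᵐ s ∂μ, ‖xh' s‖ ≤ ‖p₀‖ := by
    set gext : ℝ → H := (Icc (0:ℝ) T).indicator xh' with hgext
    have hgext_int : Integrable gext volume := by
      rw [hgext, integrable_indicator_iff measurableSet_Icc]
      exact hgIcc
    have hLD := IsUnifLocDoublingMeasure.ae_tendsto_average (μ := (volume : Measure ℝ))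
      hgext_int.locallyIntegrable 1
    have hIoo : ∀ᵐ x ∂μ, x ∈ Ioo (0:ℝ) T := by
      rw [ae_iff, hμ, Measure.restrict_apply' measurableSet_Icc]
      have hnull : volume ({0, T} : Set ℝ) = 0 :=
        ((finite_singleton T).insert 0).measure_zero volume
      refine measure_mono_null ?_ hnull
      intro x hx
      simp only [mem_inter_iff, mem_setOf_eq, mem_Ioo, not_and_or, not_lt, mem_Icc] at hx
      obtain ⟨h1, h2, h3⟩ := hx
      rcases h1 with h1 | h1
      · have hx0 : x = 0 := le_antisymm h1 h2
        simp [hx0]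
      · have hxT : x = T := le_antisymm h3 h1
        simp [hxT]
    filter_upwards [ae_restrict_of_ae hLD, hIoo, ae_restrict_mem measurableSet_Icc]
      with x hx hxIoo hxIcc
    have hxmem : ∀ᶠ r in nhdsWithin (0:ℝ) (Ioi 0), x ∈ Metric.closedBall x (1 * r) := by
      filter_upwards [self_mem_nhdsWithin] with r hr
      have hr' : (0:ℝ) < r := hr
      simp only [Metric.mem_closedBall, dist_self]
      linarith
    have hx' := hx (fun _ : ℝ => x) (fun r : ℝ => r) Filter.tendsto_id hxmem
    have hnorm_tendsto := hx'.norm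
    have hev : ∀ᶠ r in nhdsWithin (0:ℝ) (Ioi 0),
        ‖⨍ y in Metric.closedBall x r, gext y ∂(volume : Measure ℝ)‖ ≤ ‖p₀‖ := by
      have hmin : (0:ℝ) < min x (T - x) := by
        apply lt_min
        · exact hxIoo.1
        · linarith [hxIoo.2]
      filter_upwards [Ioo_mem_nhdsGT_of_mem (by constructor <;> [exact le_rfl; exact hmin])]
        with r hr
      have hr0 : (0:ℝ) < r := hr.1
      have hrx : r < x := lt_of_lt_of_le hr.2 (min_le_left _ _)
      have hrT : r < T - x := lt_of_lt_of_le hr.2 (min_le_right _ _)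
      have hxr0 : (0:ℝ) ≤ x - r := by linarith
      have hxrT : x + r ≤ T := by linarith
      have hball : Metric.closedBall x r = Icc (x-r) (x+r) := Real.closedBall_eq_Icc
      have hintval : (∫ y in Metric.closedBall x r, gext y) = xh (x+r) - xh (x-r) := by
        rw [hball]
        have h1 : (∫ y in Icc (x-r) (x+r), gext y) = ∫ y in Icc (x-r) (x+r), xh' y := by
          apply setIntegral_congr_fun measurableSet_Icc
          intro y hy
          have hymem : y ∈ Icc (0:ℝ) T := ⟨by linarith [hy.1], by linarith [hy.2]⟩
          exact indicator_of_mem hymem xh'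
        rw [h1, integral_Icc_eq_integral_Ioc,
          ← intervalIntegral.integral_of_le (by linarith : x - r ≤ x + r)]
        have e1 := hrep (x+r) ⟨by linarith, hxrT⟩
        have e2 := hrep (x-r) ⟨hxr0, by linarith⟩
        have e3 : (∫ σ in (0:ℝ)..(x+r), xh' σ)
            = (∫ σ in (0:ℝ)..(x-r), xh' σ) + ∫ σ in (x-r)..(x+r), xh' σ :=
          (intervalIntegral.integral_add_adjacent_intervals
            (hII 0 (x-r) le_rfl hxr0 (by linarith))
            (hII (x-r) (x+r) hxr0 (by linarith) hxrT)).symm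
        rw [e1, e2, e3]
        abel
      have hmeasball : volume.real (Metric.closedBall x r) = 2*r := by
        rw [measureReal_def, hball, Real.volume_Icc, ENNReal.toReal_ofReal (by linarith)]
        ring
      rw [setAverage_eq, hintval, hmeasball]
      have hsh := hshift (2*r) (x-r) (by linarith) hxr0 (by linarith)
      rw [show x - r + 2*r = x + r by ring] at hsh
      rw [norm_smul]
      have h2r : (0:ℝ) < 2*r := by linarith
      calc ‖(2*r)⁻¹‖ * ‖xh (x+r) - xh (x-r)‖
          = (2*r)⁻¹ * ‖xh (x+r) - xh (x-r)‖ := by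
            rw [Real.norm_eq_abs, abs_of_pos (by positivity)]
        _ ≤ (2*r)⁻¹ * (‖p₀‖ * (2*r)) := by
            apply mul_le_mul_of_nonneg_left hsh (by positivity)
        _ = ‖p₀‖ := by field_simp
    have hfinal : ‖gext x‖ ≤ ‖p₀‖ := le_of_tendsto hnorm_tendsto hev
    rwa [hgext, indicator_of_mem hxIcc] at hfinal
  -- conclusion
  have hsq_int : Integrable (fun t => ‖xh' t‖^2) μ :=
    (memLp_two_iff_integrable_sq_norm hgint.1).mp hmem
  have hle : (∫ t, ‖xh' t‖^2 ∂μ) ≤ ∫ t, ‖p₀‖^2 ∂μ := by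
    apply integral_mono_ae hsq_int (integrable_const _)
    filter_upwards [hg_bound] with t htb
    have h1 := norm_nonneg (xh' t)
    nlinarith [norm_nonneg p₀]
  have hconst : (∫ t, ‖p₀‖^2 ∂μ) = T * ‖p₀‖^2 := by
    rw [integral_const, measureReal_def, hμ, Measure.restrict_apply_univ, Real.volume_Icc,
      ENNReal.toReal_ofReal (by linarith), smul_eq_mul, sub_zero]
  calc (∫ t in Icc (0:ℝ) T, ‖xh' t‖^2) = ∫ t, ‖xh' t‖^2 ∂μ := rfl
    _ ≤ ∫ t, ‖p₀‖^2 ∂μ := hle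
    _ = T * ‖p₀‖^2 := hconst
end
end
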